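/- arXiv:2306.13823 — 3 statements merged into one kernel-verified Lean document; each statement's English description precedes it below -/
import Mathlib

section
/- Every nontrivial increasing graph property F = F_n has a threshold function; that is, there exists p₀ = p₀(n) such that P(G_{n,p} ∈ F_n) → 0 whenever p ≪ p₀ and P(G_{n,p} ∈ F_n) → 1 whenever p ≫ p₀. -/
open Finset
set_option linter.unusedSectionVars false

variable {ι : Type*} [Fintype ι] [DecidableEq ι]

noncomputable def btW (p : ℝ) (ω : ι → Bool) : ℝ := ∏ i, if ω i then p else 1 - p

lemma btW_conv (p s : ℝ) (χ : ι → Bool) :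
    ∑ ωτ : (ι → Bool) × (ι → Bool),
      (if (fun i => ωτ.1 i || ωτ.2 i) = χ then btW p ωτ.1 * btW s ωτ.2 else 0)
      = btW (p + s - p * s) χ := by
  classical
  rw [← Equiv.sum_comp (Equiv.arrowProdEquivProdArrow ι (fun _ => Bool) (fun _ => Bool))
      (fun ωτ : (ι → Bool) × (ι → Bool) =>
      (if (fun i => ωτ.1 i || ωτ.2 i) = χ then btW p ωτ.1 * btW s ωτ.2 else 0))]
  have hstep : ∀ η : ι → Bool × Bool,
      (if (fun i => (η i).1 || (η i).2) = χ then btW p (fun i => (η i).1) * btW s (fun i => (η i).2) else 0)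
      = if (∀ i, ((η i).1 || (η i).2) = χ i) then
          ∏ i, ((if (η i).1 then p else 1 - p) * (if (η i).2 then s else 1 - s)) else 0 := by
    intro η
    by_cases h : (fun i => (η i).1 || (η i).2) = χ
    · rw [if_pos h, if_pos (funext_iff.mp h), btW, btW, ← Finset.prod_mul_distrib]
    · rw [if_neg h, if_neg (fun hh => h (funext hh))]
  have he : ∀ η : ι → Bool × Bool, (Equiv.arrowProdEquivProdArrow ι (fun _ => Bool) (fun _ => Bool)) η
      = (fun i => (η i).1, fun i => (η i).2) := fun _ => rfl
  simp only [he]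
  simp only [hstep]
  rw [← Finset.sum_filter]
  have hset : (univ.filter fun η : ι → Bool × Bool => ∀ i, ((η i).1 || (η i).2) = χ i)
      = Fintype.piFinset (fun i => univ.filter fun y : Bool × Bool => (y.1 || y.2) = χ i) := by
    ext η; simp [Fintype.mem_piFinset]
  rw [hset, ← Finset.prod_univ_sum (fun i => univ.filter fun y : Bool × Bool => (y.1 || y.2) = χ i)
      (fun _ y => (if y.1 then p else 1 - p) * (if y.2 then s else 1 - s))]
  rw [btW]
  refine Finset.prod_congr rfl fun i _ => ?_
  by_cases h : χ i = true
  · rw [if_pos h]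
    rw [Finset.sum_filter]
    rw [Fintype.sum_prod_type]
    simp [Fintype.sum_bool, h]
    ring
  · rw [if_neg h]
    rw [Finset.sum_filter, Fintype.sum_prod_type]
    simp only [Bool.not_eq_true] at h
    simp [Fintype.sum_bool, h]
    ring

section Mass
variable (𝒜 : Finset (ι → Bool))

/-- "bad mass": probability of the complement family. -/
noncomputable def btG (p : ℝ) : ℝ := ∑ ω ∈ 𝒜ᶜ, btW p ω

noncomputable def btF (p : ℝ) : ℝ := ∑ ω ∈ 𝒜, btW p ω

lemma btW_sum (p : ℝ) : ∑ ω : ι → Bool, btW p ω = 1 := by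
  have h := Finset.prod_univ_sum (fun _ : ι => (Finset.univ : Finset Bool))
    (fun _ b => if b then p else 1 - p)
  simp only [Fintype.piFinset_univ] at h
  unfold btW
  rw [← h]
  simp

lemma btW_nonneg {p : ℝ} (hp0 : 0 ≤ p) (hp1 : p ≤ 1) (ω : ι → Bool) : 0 ≤ btW p ω := by
  refine Finset.prod_nonneg fun i _ => ?_
  by_cases h : ω i <;> simp [h] <;> linarith

lemma btF_add_btG (p : ℝ) : btF 𝒜 p + btG 𝒜 p = 1 := by
  rw [btF, btG, Finset.sum_add_sum_compl, btW_sum]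

lemma btG_nonneg {p : ℝ} (hp0 : 0 ≤ p) (hp1 : p ≤ 1) : 0 ≤ btG 𝒜 p :=
  Finset.sum_nonneg fun ω _ => btW_nonneg hp0 hp1 ω

lemma btF_nonneg {p : ℝ} (hp0 : 0 ≤ p) (hp1 : p ≤ 1) : 0 ≤ btF 𝒜 p :=
  Finset.sum_nonneg fun ω _ => btW_nonneg hp0 hp1 ω

lemma btG_le_one {p : ℝ} (hp0 : 0 ≤ p) (hp1 : p ≤ 1) : btG 𝒜 p ≤ 1 := by
  have := btF_add_btG 𝒜 p
  have := btF_nonneg 𝒜 hp0 hp1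
  linarith

lemma btF_le_one {p : ℝ} (hp0 : 0 ≤ p) (hp1 : p ≤ 1) : btF 𝒜 p ≤ 1 := by
  have := btF_add_btG 𝒜 p
  have := btG_nonneg 𝒜 hp0 hp1
  linarith

variable (hup : ∀ ω τ : ι → Bool, (∀ i, ω i = true → τ i = true) → ω ∈ 𝒜 → τ ∈ 𝒜)
include hup

lemma btG_subadd {p s : ℝ} (hp0 : 0 ≤ p) (hp1 : p ≤ 1) (hs0 : 0 ≤ s) (hs1 : s ≤ 1) :
    btG 𝒜 (p + s - p * s) ≤ btG 𝒜 p * btG 𝒜 s := by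
  classical
  have h1 : btG 𝒜 (p + s - p * s)
      = ∑ χ ∈ 𝒜ᶜ, ∑ ωτ : (ι → Bool) × (ι → Bool),
          (if (fun i => ωτ.1 i || ωτ.2 i) = χ then btW p ωτ.1 * btW s ωτ.2 else 0) := by
    rw [btG]; exact Finset.sum_congr rfl fun χ _ => (btW_conv p s χ).symm
  rw [h1, Finset.sum_comm]
  have h2 : ∀ ωτ : (ι → Bool) × (ι → Bool),
      (∑ χ ∈ 𝒜ᶜ, if (fun i => ωτ.1 i || ωτ.2 i) = χ then btW p ωτ.1 * btW s ωτ.2 else 0)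
      = if (fun i => ωτ.1 i || ωτ.2 i) ∈ 𝒜ᶜ then btW p ωτ.1 * btW s ωτ.2 else 0 := by
    intro ωτ
    exact Finset.sum_ite_eq (𝒜ᶜ) _ (fun _ => btW p ωτ.1 * btW s ωτ.2)
  simp only [h2]
  have h3 : ∀ ωτ : (ι → Bool) × (ι → Bool),
      (if (fun i => ωτ.1 i || ωτ.2 i) ∈ 𝒜ᶜ then btW p ωτ.1 * btW s ωτ.2 else 0)
      ≤ (if ωτ.1 ∈ 𝒜ᶜ then btW p ωτ.1 else 0) * (if ωτ.2 ∈ 𝒜ᶜ then btW s ωτ.2 else 0) := by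
    intro ωτ
    by_cases h : (fun i => ωτ.1 i || ωτ.2 i) ∈ 𝒜ᶜ
    · have hω : ωτ.1 ∈ 𝒜ᶜ := by
        simp only [Finset.mem_compl] at h ⊢
        exact fun hmem => h (hup _ _ (fun i hi => by simp [hi]) hmem)
      have hτ : ωτ.2 ∈ 𝒜ᶜ := by
        simp only [Finset.mem_compl] at h ⊢
        exact fun hmem => h (hup _ _ (fun i hi => by simp [hi]) hmem)
      rw [if_pos h, if_pos hω, if_pos hτ]
    · rw [if_neg h]
      exact mul_nonneg (by split_ifs; exacts [btW_nonneg hp0 hp1 _, le_refl 0])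
        (by split_ifs; exacts [btW_nonneg hs0 hs1 _, le_refl 0])
  refine le_trans (Finset.sum_le_sum fun ωτ _ => h3 ωτ) ?_
  rw [Fintype.sum_prod_type]
  show (∑ x : ι → Bool, ∑ y : ι → Bool,
      (if x ∈ 𝒜ᶜ then btW p x else 0) * (if y ∈ 𝒜ᶜ then btW s y else 0)) ≤ _
  rw [← Finset.sum_mul_sum]
  have hh : ∀ r : ℝ, (∑ x : ι → Bool, if x ∈ 𝒜ᶜ then btW r x else 0) = ∑ ω ∈ 𝒜ᶜ, btW r ω := by
    intro r
    rw [Finset.sum_ite_mem, Finset.univ_inter]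
  rw [btG, btG, hh, hh]

lemma btG_anti {p q : ℝ} (hp0 : 0 ≤ p) (hpq : p ≤ q) (hq1 : q ≤ 1) : btG 𝒜 q ≤ btG 𝒜 p := by
  rcases eq_or_lt_of_le (le_trans hpq hq1) with h1 | h1
  · have : q = 1 := le_antisymm hq1 (h1 ▸ hpq)
    rw [this, ← h1]
  · set s := (q - p) / (1 - p) with hs
    have hd : (0:ℝ) < 1 - p := by linarith
    have hs0 : 0 ≤ s := div_nonneg (by linarith) (le_of_lt hd)
    have hs1 : s ≤ 1 := by
      rw [div_le_one hd]; linarith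
    have hq : q = p + s - p * s := by
      rw [hs]
      field_simp
      ring
    rw [hq]
    refine le_trans (btG_subadd 𝒜 hup hp0 (by linarith) hs0 hs1) ?_
    have := btG_le_one 𝒜 hs0 hs1
    have := btG_nonneg 𝒜 hp0 (by linarith : p ≤ 1)
    nlinarith

lemma btG_pow {p : ℝ} (hp0 : 0 ≤ p) (hp1 : p ≤ 1) :
    ∀ m : ℕ, btG 𝒜 (1 - (1 - p) ^ m) ≤ (btG 𝒜 p) ^ m := by
  intro m
  induction m with
  | zero => simpa using btG_le_one 𝒜 (le_refl 0) zero_le_one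
  | succ m ih =>
    have hq0 : 0 ≤ 1 - (1 - p) ^ m := by
      have : (1 - p) ^ m ≤ 1 := pow_le_one₀ (by linarith) (by linarith)
      linarith
    have hq1 : 1 - (1 - p) ^ m ≤ 1 := by
      have : 0 ≤ (1 - p) ^ m := pow_nonneg (by linarith) m
      linarith
    have key : 1 - (1 - p) ^ (m + 1) = p + (1 - (1 - p) ^ m) - p * (1 - (1 - p) ^ m) := by
      ring
    rw [key, pow_succ]
    refine le_trans (btG_subadd 𝒜 hup hp0 hp1 hq0 hq1) ?_
    rw [mul_comm]
    exact mul_le_mul_of_nonneg_right ih (btG_nonneg 𝒜 hp0 hp1)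

end Mass

lemma btW_eq_pow (p : ℝ) (ω : ι → Bool) :
    btW p ω = p ^ (univ.filter fun i => ω i = true).card
      * (1 - p) ^ (Fintype.card ι - (univ.filter fun i => ω i = true).card) := by
  rw [btW, Finset.prod_ite]
  rw [Finset.prod_const, Finset.prod_const]
  congr 2
  have := Finset.card_filter_add_card_filter_not (s := (univ : Finset ι))
    (p := fun i => ω i = true)
  rw [Finset.card_univ] at this
  omega

lemma btW_zero (ω : ι → Bool) :
    btW 0 ω = if ω = (fun _ => false) then 1 else 0 := by
  by_cases h : ω = fun _ => false
  · subst h; simp [btW]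
  · rw [if_neg h, btW]
    obtain ⟨i, hi⟩ : ∃ i, ω i = true := by
      by_contra hc
      push_neg at hc
      exact h (funext fun i => by simpa using hc i)
    exact Finset.prod_eq_zero (Finset.mem_univ i) (by simp [hi])

lemma btW_one (ω : ι → Bool) :
    btW 1 ω = if ω = (fun _ => true) then 1 else 0 := by
  by_cases h : ω = fun _ => true
  · subst h; simp [btW]
  · rw [if_neg h, btW]
    obtain ⟨i, hi⟩ : ∃ i, ω i = false := by
      by_contra hc
      push_neg at hc
      exact h (funext fun i => by simpa [Bool.not_eq_false] using hc i)
    exact Finset.prod_eq_zero (Finset.mem_univ i) (by simp [hi])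

lemma btF_zero (𝒜 : Finset (ι → Bool)) (h : (fun _ => false) ∉ 𝒜) : btF 𝒜 0 = 0 := by
  rw [btF]
  refine Finset.sum_eq_zero fun ω hω => ?_
  rw [btW_zero, if_neg]
  rintro rfl; exact h hω

lemma btF_one (𝒜 : Finset (ι → Bool)) (h : (fun _ => true) ∈ 𝒜) : btF 𝒜 1 = 1 := by
  rw [btF]
  have : ∀ ω ∈ 𝒜, btW 1 ω = if ω = (fun _ => true) then 1 else 0 := fun ω _ => btW_one ω
  rw [Finset.sum_congr rfl this, Finset.sum_ite_eq' 𝒜 (fun _ => true) (fun _ => 1), if_pos h]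

lemma btF_continuous (𝒜 : Finset (ι → Bool)) : Continuous (fun p => btF 𝒜 p) := by
  unfold btF btW
  refine continuous_finset_sum _ fun ω _ => continuous_finset_prod _ fun i _ => ?_
  by_cases h : ω i <;> simp [h] <;> fun_prop

abbrev btEI (n : ℕ) := {e : Sym2 (Fin n) // ¬ e.IsDiag}

open Classical in
noncomputable def btOmega {n : ℕ} (G : SimpleGraph (Fin n)) : btEI n → Bool :=
  fun e => if e.1 ∈ G.edgeSet then true else false

noncomputable def btGraph {n : ℕ} (ω : btEI n → Bool) : SimpleGraph (Fin n) :=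
  SimpleGraph.fromEdgeSet {e | ∃ h : ¬ e.IsDiag, ω ⟨e, h⟩ = true}

lemma btOmega_true_iff {n : ℕ} (G : SimpleGraph (Fin n)) (e : btEI n) :
    btOmega G e = true ↔ e.1 ∈ G.edgeSet := by
  classical
  by_cases h : e.1 ∈ G.edgeSet <;> simp [btOmega, h]

lemma btGraph_btOmega {n : ℕ} (G : SimpleGraph (Fin n)) : btGraph (btOmega G) = G := by
  ext v w
  simp only [btGraph, SimpleGraph.fromEdgeSet_adj, Set.mem_setOf_eq]
  constructor
  · rintro ⟨⟨h, hω⟩, hne⟩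
    rw [btOmega_true_iff] at hω
    exact (SimpleGraph.mem_edgeSet G).mp hω
  · intro hadj
    have hne : v ≠ w := G.ne_of_adj hadj
    refine ⟨⟨by simp [hne], ?_⟩, hne⟩
    rw [btOmega_true_iff]
    exact (SimpleGraph.mem_edgeSet G).mpr hadj

lemma btOmega_btGraph {n : ℕ} (ω : btEI n → Bool) : btOmega (btGraph ω) = ω := by
  funext e
  obtain ⟨e, he⟩ := e
  induction e with
  | _ v w =>
    have hne : v ≠ w := by simpa using he
    by_cases h : ω ⟨s(v, w), he⟩ = true
    · have : s(v,w) ∈ (btGraph ω).edgeSet := by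
        rw [SimpleGraph.mem_edgeSet, btGraph, SimpleGraph.fromEdgeSet_adj]
        exact ⟨⟨he, h⟩, hne⟩
      rw [h]
      exact (btOmega_true_iff _ _).mpr this
    · rw [Bool.not_eq_true] at h
      rw [h, Bool.eq_false_iff, Ne, btOmega_true_iff]
      rw [SimpleGraph.mem_edgeSet, btGraph, SimpleGraph.fromEdgeSet_adj]
      rintro ⟨⟨h', hω⟩, -⟩
      rw [show (⟨s(v,w), h'⟩ : btEI n) = ⟨s(v,w), he⟩ from rfl] at hω
      rw [h] at hω
      exact Bool.false_ne_true hω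

noncomputable def btEquiv (n : ℕ) : SimpleGraph (Fin n) ≃ (btEI n → Bool) :=
  ⟨btOmega, btGraph, btGraph_btOmega, btOmega_btGraph⟩

lemma btGraph_mono {n : ℕ} {ω τ : btEI n → Bool} (h : ∀ i, ω i = true → τ i = true) :
    btGraph ω ≤ btGraph τ := by
  apply SimpleGraph.fromEdgeSet_mono
  rintro e ⟨he, hω⟩
  exact ⟨he, h _ hω⟩

lemma btGraph_false {n : ℕ} : btGraph (fun _ : btEI n => false) = ⊥ := by
  ext v w
  simp [btGraph, SimpleGraph.fromEdgeSet_adj]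

lemma btGraph_true {n : ℕ} : btGraph (fun _ : btEI n => true) = ⊤ := by
  ext v w
  simp only [btGraph, SimpleGraph.fromEdgeSet_adj, Set.mem_setOf_eq, SimpleGraph.top_adj]
  constructor
  · rintro ⟨-, h⟩; exact h
  · intro h; exact ⟨by simp [h], h⟩

lemma btCard (n : ℕ) : Fintype.card (btEI n) = n.choose 2 := by
  rw [Sym2.card_subtype_not_diag, Fintype.card_fin]

lemma btOmega_card {n : ℕ} (G : SimpleGraph (Fin n)) :
    (univ.filter fun e : btEI n => btOmega G e = true).card = Nat.card G.edgeSet := by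
  classical
  rw [← Fintype.card_subtype]
  rw [Nat.card_eq_fintype_card (α := G.edgeSet)]
  refine Fintype.card_congr ?_
  exact {
    toFun := fun x => ⟨x.1.1, (btOmega_true_iff G x.1).mp x.2⟩
    invFun := fun e => ⟨⟨e.1, SimpleGraph.not_isDiag_of_mem_edgeSet G e.2⟩,
      (btOmega_true_iff G _).mpr e.2⟩
    left_inv := fun x => Subtype.ext (Subtype.ext rfl)
    right_inv := fun e => Subtype.ext rfl }



open Classical in
/-- Probability that the Erdős–Rényi random graph `G_{n,p}` (on vertex set `Fin n`,
each potential edge present independently with probability `p`) satisfies `P`. -/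
noncomputable def erProb (n : ℕ) (p : ℝ) (P : SimpleGraph (Fin n) → Prop) : ℝ :=
  ∑ G : SimpleGraph (Fin n),
    if P G then p ^ (Nat.card G.edgeSet) * (1 - p) ^ (n.choose 2 - Nat.card G.edgeSet) else 0

open Classical in
lemma erProb_eq_btF (n : ℕ) (p : ℝ) (F : Set (SimpleGraph (Fin n))) :
    erProb n p (fun G => G ∈ F) = btF (univ.filter fun ω : btEI n → Bool => btGraph ω ∈ F) p := by
  classical
  rw [erProb, btF, Finset.sum_filter]
  refine Fintype.sum_equiv (btEquiv n) _ _ fun G => ?_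
  show _ = if btGraph (btOmega G) ∈ F then btW p (btOmega G) else 0
  rw [btGraph_btOmega]
  by_cases h : G ∈ F
  · rw [if_pos h, if_pos h, btW_eq_pow, btOmega_card, btCard]
  · rw [if_neg h, if_neg h]


open Classical in
noncomputable def btA (F : ∀ n : ℕ, Set (SimpleGraph (Fin n))) (n : ℕ) : Finset (btEI n → Bool) :=
  univ.filter (fun ω => btGraph ω ∈ F n)

lemma btA_up (F : ∀ n : ℕ, Set (SimpleGraph (Fin n)))
    (hinc : ∀ (n : ℕ) (G H : SimpleGraph (Fin n)), G ≤ H → G ∈ F n → H ∈ F n) (n : ℕ) :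
    ∀ ω τ : btEI n → Bool, (∀ i, ω i = true → τ i = true) → ω ∈ btA F n → τ ∈ btA F n := by
  classical
  intro ω τ h hω
  rw [btA, Finset.mem_filter] at hω ⊢
  exact ⟨Finset.mem_univ τ, hinc n _ _ (btGraph_mono h) hω.2⟩

lemma btA_exists (F : ∀ n : ℕ, Set (SimpleGraph (Fin n)))
    (hinc : ∀ (n : ℕ) (G H : SimpleGraph (Fin n)), G ≤ H → G ∈ F n → H ∈ F n) (n : ℕ)
    (hne : (F n).Nonempty) (hnf : F n ≠ Set.univ) :
    ∃ x : ℝ, 0 < x ∧ x ≤ 1 ∧ btF (btA F n) x = 1/2 := by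
  classical
  have hbot : (fun _ : btEI n => false) ∉ btA F n := by
    rw [btA, Finset.mem_filter, btGraph_false]
    rintro ⟨-, hb⟩
    obtain ⟨H, hH⟩ := Set.ne_univ_iff_exists_notMem _ |>.mp hnf
    exact hH (hinc n ⊥ H bot_le hb)
  have htop : (fun _ : btEI n => true) ∈ btA F n := by
    rw [btA, Finset.mem_filter, btGraph_true]
    obtain ⟨G₀, hG₀⟩ := hne
    exact ⟨Finset.mem_univ _, hinc n G₀ ⊤ le_top hG₀⟩
  have h0 : btF (btA F n) 0 = 0 := btF_zero _ hbot
  have h1 : btF (btA F n) 1 = 1 := btF_one _ htop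
  have := intermediate_value_Icc (zero_le_one' ℝ) (btF_continuous (btA F n)).continuousOn
  rw [h0, h1] at this
  obtain ⟨x, hx, hfx⟩ := this (by norm_num : (1/2 : ℝ) ∈ Set.Icc (0:ℝ) 1)
  simp only at hfx
  refine ⟨x, ?_, hx.2, hfx⟩
  rcases eq_or_lt_of_le hx.1 with h | h
  · exfalso; rw [← h, h0] at hfx; norm_num at hfx
  · exact h

open Classical in
noncomputable def btp₀ (F : ∀ n : ℕ, Set (SimpleGraph (Fin n))) (n : ℕ) : ℝ :=
  if h : ∃ x : ℝ, 0 < x ∧ x ≤ 1 ∧ btF (btA F n) x = 1/2 then h.choose else 1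

lemma btp₀_pos (F : ∀ n : ℕ, Set (SimpleGraph (Fin n))) (n : ℕ) : 0 < btp₀ F n := by
  rw [btp₀]
  split
  · next h => exact h.choose_spec.1
  · exact one_pos

lemma btp₀_spec (F : ∀ n : ℕ, Set (SimpleGraph (Fin n))) (n : ℕ)
    (h : ∃ x : ℝ, 0 < x ∧ x ≤ 1 ∧ btF (btA F n) x = 1/2) :
    btp₀ F n ≤ 1 ∧ btF (btA F n) (btp₀ F n) = 1/2 := by
  rw [btp₀, dif_pos h]
  exact ⟨h.choose_spec.2.1, h.choose_spec.2.2⟩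


open Filter in
/-- **Bollobás–Thomason**: every nontrivial increasing graph property has a threshold
function `p₀`: `P(G_{n,p} ∈ F_n) → 0` whenever `p ≪ p₀` and `P(G_{n,p} ∈ F_n) → 1`
whenever `p ≫ p₀`. -/
theorem bollobas_thomason_threshold (F : ∀ n : ℕ, Set (SimpleGraph (Fin n)))
    (hiso : ∀ (n : ℕ) (G H : SimpleGraph (Fin n)), Nonempty (G ≃g H) → (G ∈ F n ↔ H ∈ F n))
    (hinc : ∀ (n : ℕ) (G H : SimpleGraph (Fin n)), G ≤ H → G ∈ F n → H ∈ F n)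
    (hnonempty : ∀ᶠ n in Filter.atTop, (F n).Nonempty)
    (hnonfull : ∀ᶠ n in Filter.atTop, F n ≠ Set.univ) :
    ∃ p₀ : ℕ → ℝ, (∀ n, 0 < p₀ n) ∧
      ∀ p : ℕ → ℝ, (∀ n, 0 ≤ p n ∧ p n ≤ 1) →
        (Filter.Tendsto (fun n => p n / p₀ n) Filter.atTop (nhds 0) →
          Filter.Tendsto (fun n => erProb n (p n) (fun G => G ∈ F n)) Filter.atTop (nhds 0)) ∧
        (Filter.Tendsto (fun n => p n / p₀ n) Filter.atTop Filter.atTop →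
          Filter.Tendsto (fun n => erProb n (p n) (fun G => G ∈ F n)) Filter.atTop (nhds 1)) := by
  classical
  refine ⟨btp₀ F, btp₀_pos F, ?_⟩
  intro p hp
  have hfun : (fun n => erProb n (p n) (fun G => G ∈ F n))
      = fun n => btF (btA F n) (p n) := funext fun n => erProb_eq_btF n (p n) (F n)
  have hGood : ∀ᶠ n in Filter.atTop,
      (btp₀ F n ≤ 1 ∧ btF (btA F n) (btp₀ F n) = 1/2) := by
    filter_upwards [hnonempty, hnonfull] with n h1 h2
    exact btp₀_spec F n (btA_exists F hinc n h1 h2)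
  constructor
  · intro h0
    rw [hfun]
    rw [NormedAddCommGroup.tendsto_nhds_zero]
    intro ε hε
    set ε' : ℝ := min ε (1/2) with hε'def
    have hε'0 : 0 < ε' := lt_min hε (by norm_num)
    have hε'half : ε' ≤ 1/2 := min_le_right _ _
    obtain ⟨m, hm⟩ : ∃ m : ℕ, (1 - ε')^m < 1/2 :=
      exists_pow_lt_of_lt_one (by norm_num) (by linarith)
    have hev : ∀ᶠ n in atTop, p n / btp₀ F n < 1/(m+1) :=
      (tendsto_order.mp h0).2 _ (by positivity)
    filter_upwards [hGood, hev] with n hg hsm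
    have hp0 := (hp n).1; have hp1 := (hp n).2
    have hpos := btp₀_pos F n
    have hmp : (m : ℝ) * p n ≤ btp₀ F n := by
      have hm1 : (0:ℝ) < (m:ℝ) + 1 := by positivity
      rw [div_lt_iff₀ hpos] at hsm
      have h2 : p n * ((m:ℝ)+1) < btp₀ F n := by
        rw [← lt_div_iff₀ hm1]
        calc p n < 1/((m:ℝ)+1) * btp₀ F n := hsm
        _ = btp₀ F n / ((m:ℝ)+1) := by ring
      nlinarith [hp0]
    set q : ℝ := 1 - (1 - p n)^m with hq
    have h1pm0 : (0:ℝ) ≤ (1 - p n)^m := pow_nonneg (by linarith) m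
    have h1pm1 : (1 - p n)^m ≤ 1 := pow_le_one₀ (by linarith) (by linarith)
    have hq0 : 0 ≤ q := by rw [hq]; linarith
    have hq1 : q ≤ 1 := by rw [hq]; linarith
    have hbern : q ≤ (m:ℝ) * p n := by
      have hb := one_add_mul_le_pow (a := -(p n)) (by linarith) m
      simp only [← sub_eq_add_neg, mul_neg] at hb
      rw [hq]; linarith [hb]
    have hqp0 : q ≤ btp₀ F n := le_trans hbern hmp
    have hup := btA_up F hinc n
    have hganti : btG (btA F n) (btp₀ F n) ≤ btG (btA F n) q :=
      btG_anti _ hup hq0 hqp0 hg.1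
    have hgpow : btG (btA F n) q ≤ (btG (btA F n) (p n))^m := by
      rw [hq]; exact btG_pow _ hup hp0 hp1 m
    have hgval : btG (btA F n) (btp₀ F n) = 1/2 := by
      have hh := btF_add_btG (btA F n) (btp₀ F n); rw [hg.2] at hh; linarith
    have hag : btF (btA F n) (p n) + btG (btA F n) (p n) = 1 := btF_add_btG _ _
    have ha0 : 0 ≤ btF (btA F n) (p n) := btF_nonneg _ hp0 hp1
    have halt : btF (btA F n) (p n) < ε' := by
      by_contra hc
      push_neg at hc
      have hgnn : 0 ≤ btG (btA F n) (p n) := btG_nonneg _ hp0 hp1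
      have hle : btG (btA F n) (p n) ≤ 1 - ε' := by linarith
      have : (btG (btA F n) (p n))^m ≤ (1-ε')^m := pow_le_pow_left₀ hgnn hle m
      linarith
    rw [Real.norm_eq_abs, abs_of_nonneg ha0]
    exact lt_of_lt_of_le halt (min_le_left _ _)
  · intro hinf
    rw [hfun, ← tendsto_sub_nhds_zero_iff]
    rw [NormedAddCommGroup.tendsto_nhds_zero]
    intro ε hε
    obtain ⟨m, hm⟩ : ∃ m : ℕ, (1/2:ℝ)^m < ε :=
      exists_pow_lt_of_lt_one hε (by norm_num)
    have hev : ∀ᶠ n in atTop, (m:ℝ) ≤ p n / btp₀ F n := hinf.eventually_ge_atTop _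
    filter_upwards [hGood, hev] with n hg hsm
    have hp0 := (hp n).1; have hp1 := (hp n).2
    have hpos := btp₀_pos F n
    have hmp : (m : ℝ) * btp₀ F n ≤ p n := by
      rw [le_div_iff₀ hpos] at hsm; linarith
    set q : ℝ := 1 - (1 - btp₀ F n)^m with hq
    have h1pm0 : (0:ℝ) ≤ (1 - btp₀ F n)^m := pow_nonneg (by linarith [hg.1]) m
    have h1pm1 : (1 - btp₀ F n)^m ≤ 1 := pow_le_one₀ (by linarith [hg.1]) (by linarith)
    have hq0 : 0 ≤ q := by rw [hq]; linarith
    have hbern : q ≤ (m:ℝ) * btp₀ F n := by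
      have hb := one_add_mul_le_pow (a := -(btp₀ F n)) (by linarith) m
      simp only [← sub_eq_add_neg, mul_neg] at hb
      rw [hq]; linarith [hb]
    have hqp : q ≤ p n := le_trans hbern hmp
    have hup := btA_up F hinc n
    have hganti : btG (btA F n) (p n) ≤ btG (btA F n) q :=
      btG_anti _ hup hq0 hqp hp1
    have hgpow : btG (btA F n) q ≤ (btG (btA F n) (btp₀ F n))^m := by
      rw [hq]; exact btG_pow _ hup (le_of_lt hpos) hg.1 m
    have hgval : btG (btA F n) (btp₀ F n) = 1/2 := by
      have hh := btF_add_btG (btA F n) (btp₀ F n); rw [hg.2] at hh; linarith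
    have hag : btF (btA F n) (p n) + btG (btA F n) (p n) = 1 := btF_add_btG _ _
    have hgnn : 0 ≤ btG (btA F n) (p n) := btG_nonneg _ hp0 hp1
    have : btG (btA F n) (p n) < ε := by
      rw [hgval] at hgpow
      linarith
    rw [Real.norm_eq_abs, show btF (btA F n) (p n) - 1 = -(btG (btA F n) (p n)) by linarith,
      abs_neg, abs_of_nonneg hgnn]
    exact this
end

section
/- p₀(n) = (log n)/n is a threshold function for the property that G_{n,p} is connected (equivalently, contains a spanning tree): if p ≪ (log n)/n then P(G_{n,p} is connected) → 0, and if p ≫ (log n)/n then P(G_{n,p} is connected) → 1. -/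
open Finset

namespace ER

/-- set of potential edges -/
def En (n : ℕ) : Finset (Sym2 (Fin n)) := univ.filter (fun e => ¬ e.IsDiag)

lemma card_En (n : ℕ) : (En n).card = n.choose 2 := by
  classical
  rw [En, ← Fintype.card_subtype, Sym2.card_subtype_not_diag, Fintype.card_fin]

lemma edgeFinset_mem_powerset (G : SimpleGraph (Fin n)) [Fintype G.edgeSet] [DecidableRel G.Adj] :
    G.edgeFinset ∈ (En n).powerset := by
  classical
  rw [mem_powerset]
  intro e he
  simp only [En, mem_filter, mem_univ, true_and]
  exact G.not_isDiag_of_mem_edgeSet (SimpleGraph.mem_edgeFinset.1 he)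

lemma natCard_eq (G : SimpleGraph (Fin n)) [Fintype G.edgeSet] [DecidableRel G.Adj] :
    Nat.card G.edgeSet = G.edgeFinset.card := by
  rw [SimpleGraph.edgeFinset_card, Nat.card_eq_fintype_card]

open Classical in
/-- reindex the sum over graphs as a sum over edge subsets. -/
lemma sum_graph_eq (n : ℕ) (f : Finset (Sym2 (Fin n)) → ℝ) :
    ∑ G : SimpleGraph (Fin n), f G.edgeFinset = ∑ s ∈ (En n).powerset, f s := by
  classical
  refine Finset.sum_bij' (fun G _ => G.edgeFinset) (fun s _ => SimpleGraph.fromEdgeSet ↑s)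
    (fun G _ => edgeFinset_mem_powerset G) (fun s hs => mem_univ _) ?_ ?_ ?_
  · intro G _
    rw [SimpleGraph.coe_edgeFinset, SimpleGraph.fromEdgeSet_edgeSet]
  · intro s hs
    rw [mem_powerset] at hs
    have h1 : (SimpleGraph.fromEdgeSet (↑s : Set (Sym2 (Fin n)))).edgeSet = ↑s := by
      rw [SimpleGraph.edgeSet_fromEdgeSet]
      rw [sdiff_eq_left, Set.disjoint_right]
      rintro e hed hes
      have := hs hes
      simp only [En, mem_filter] at this
      exact absurd hed this.2
    simp only [SimpleGraph.edgeFinset]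
    ext e
    simp only [Set.mem_toFinset]
    rw [h1]
    exact Finset.mem_coe
  · intro G _
    rfl

open Classical in
lemma erProb_eq_sum (n : ℕ) (p : ℝ) (P : SimpleGraph (Fin n) → Prop)
    (Q : Finset (Sym2 (Fin n)) → Prop)
    (hQ : ∀ G : SimpleGraph (Fin n), P G ↔ Q G.edgeFinset) :
    erProb n p P =
      ∑ s ∈ (En n).powerset, if Q s then p ^ s.card * (1 - p) ^ (n.choose 2 - s.card) else 0 := by
  classical
  rw [← sum_graph_eq n (fun s => if Q s then p ^ s.card * (1 - p) ^ (n.choose 2 - s.card) else 0)]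
  rw [erProb]
  refine Finset.sum_congr rfl fun G _ => ?_
  rw [natCard_eq G]
  by_cases h : P G
  · rw [if_pos h, if_pos ((hQ G).1 h)]
  · rw [if_neg h, if_neg (fun hq => h ((hQ G).2 hq))]


noncomputable def wt (n : ℕ) (p : ℝ) (G : SimpleGraph (Fin n)) : ℝ :=
  p ^ (Nat.card G.edgeSet) * (1 - p) ^ (n.choose 2 - Nat.card G.edgeSet)

lemma wt_nonneg {n : ℕ} {p : ℝ} (hp0 : 0 ≤ p) (hp1 : p ≤ 1) (G : SimpleGraph (Fin n)) :
    0 ≤ wt n p G :=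
  mul_nonneg (pow_nonneg hp0 _) (pow_nonneg (by linarith) _)

open Classical in
lemma erProb_def' (n : ℕ) (p : ℝ) (P : SimpleGraph (Fin n) → Prop) :
    erProb n p P = ∑ G : SimpleGraph (Fin n), if P G then wt n p G else 0 := rfl

lemma erProb_nonneg {n : ℕ} {p : ℝ} (hp0 : 0 ≤ p) (hp1 : p ≤ 1)
    (P : SimpleGraph (Fin n) → Prop) : 0 ≤ erProb n p P := by
  classical
  rw [erProb_def']
  refine Finset.sum_nonneg fun G _ => ?_
  split
  · exact wt_nonneg hp0 hp1 G
  · exact le_refl 0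

lemma erProb_mono {n : ℕ} {p : ℝ} (hp0 : 0 ≤ p) (hp1 : p ≤ 1)
    {P Q : SimpleGraph (Fin n) → Prop} (h : ∀ G, P G → Q G) :
    erProb n p P ≤ erProb n p Q := by
  classical
  rw [erProb_def', erProb_def']
  refine Finset.sum_le_sum fun G _ => ?_
  by_cases hP : P G
  · rw [if_pos hP, if_pos (h G hP)]
  · rw [if_neg hP]
    split
    · exact wt_nonneg hp0 hp1 G
    · exact le_refl 0

open Classical in
lemma erProb_avoid {n : ℕ} {p : ℝ} (S : Finset (Sym2 (Fin n))) (hS : S ⊆ En n) :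
    erProb n p (fun G => ∀ e ∈ S, e ∉ G.edgeSet) = (1 - p) ^ S.card := by
  classical
  rw [erProb_eq_sum n p _ (fun s => ∀ e ∈ S, e ∉ s)
    (fun G => by simp [SimpleGraph.mem_edgeFinset])]
  have hcardEn : (En n).card = n.choose 2 := card_En n
  have hST : (En n \ S).card + S.card = n.choose 2 := by
    rw [card_sdiff_of_subset hS]
    have := Finset.card_le_card hS
    omega
  calc _ = ∑ s ∈ (En n \ S).powerset, p ^ s.card * (1 - p) ^ (n.choose 2 - s.card) := by
        have hfe : ((En n).powerset.filter (fun s => ∀ e ∈ S, e ∉ s)) = (En n \ S).powerset := by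
          ext t
          simp only [Finset.mem_filter, Finset.mem_powerset, Finset.subset_sdiff,
            Finset.disjoint_right, and_comm]
        rw [← hfe, Finset.sum_filter]
        refine Finset.sum_congr rfl fun s _ => ?_
        by_cases h : ∀ e ∈ S, e ∉ s <;> simp [h]
    _ = ∑ s ∈ (En n \ S).powerset,
          (p ^ s.card * (1 - p) ^ ((En n \ S).card - s.card)) * (1 - p) ^ S.card := by
        refine Finset.sum_congr rfl fun s hs => ?_
        rw [Finset.mem_powerset] at hs
        have h1 : s.card ≤ (En n \ S).card := Finset.card_le_card hs
        rw [mul_assoc, ← pow_add]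
        congr 2
        omega
    _ = (1 - p) ^ S.card := by
        rw [← Finset.sum_mul, Finset.sum_pow_mul_eq_add_pow]
        norm_num

lemma erProb_true {n : ℕ} (p : ℝ) : erProb n p (fun _ => True) = 1 := by
  have h := erProb_avoid (n := n) (p := p) ∅ (Finset.empty_subset _)
  simpa using h

open Classical in
lemma erProb_compl {n : ℕ} (p : ℝ) (P : SimpleGraph (Fin n) → Prop) :
    erProb n p P + erProb n p (fun G => ¬ P G) = 1 := by
  classical
  rw [← erProb_true (n := n) p, erProb_def', erProb_def', erProb_def',
    ← Finset.sum_add_distrib]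
  refine Finset.sum_congr rfl fun G _ => ?_
  by_cases h : P G <;> simp [h]

lemma erProb_le_one {n : ℕ} {p : ℝ} (hp0 : 0 ≤ p) (hp1 : p ≤ 1)
    (P : SimpleGraph (Fin n) → Prop) : erProb n p P ≤ 1 := by
  have h := erProb_compl (n := n) p P
  have h2 := erProb_nonneg hp0 hp1 (fun G : SimpleGraph (Fin n) => ¬ P G)
  linarith

open Classical in
lemma erProb_union_bound {n : ℕ} {p : ℝ} (hp0 : 0 ≤ p) (hp1 : p ≤ 1)
    {ι : Type*} (A : Finset ι) (Q : ι → SimpleGraph (Fin n) → Prop) :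
    erProb n p (fun G => ∃ a ∈ A, Q a G) ≤ ∑ a ∈ A, erProb n p (Q a) := by
  classical
  simp only [erProb_def']
  rw [Finset.sum_comm]
  refine Finset.sum_le_sum fun G _ => ?_
  by_cases h : ∃ a ∈ A, Q a G
  · rw [if_pos h]
    obtain ⟨a, ha, hQ⟩ := h
    have : (if Q a G then wt n p G else 0) = wt n p G := if_pos hQ
    calc wt n p G = (if Q a G then wt n p G else 0) := this.symm
      _ ≤ ∑ a ∈ A, (if Q a G then wt n p G else 0) := by
          refine Finset.single_le_sum (f := fun a => if Q a G then wt n p G else 0)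
            (fun b _ => ?_) ha
          split
          · exact wt_nonneg hp0 hp1 G
          · exact le_refl 0
  · rw [if_neg h]
    refine Finset.sum_nonneg fun b _ => ?_
    split
    · exact wt_nonneg hp0 hp1 G
    · exact le_refl 0


open Classical in
lemma erProb_congr {n : ℕ} {p : ℝ} {P Q : SimpleGraph (Fin n) → Prop}
    (h : ∀ G, P G ↔ Q G) : erProb n p P = erProb n p Q := by
  classical
  rw [erProb_def', erProb_def']
  exact Finset.sum_congr rfl fun G _ => if_congr (h G) rfl rfl

/-- edges incident to `v` -/
def incid (n : ℕ) (v : Fin n) : Finset (Sym2 (Fin n)) :=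
  (univ.erase v).image (fun u => s(v, u))

lemma incid_subset {n : ℕ} (v : Fin n) : incid n v ⊆ En n := by
  intro e he
  simp only [incid, mem_image, mem_erase] at he
  obtain ⟨u, ⟨hu, _⟩, rfl⟩ := he
  simp only [En, mem_filter, mem_univ, true_and, Sym2.mk_isDiag_iff]
  exact fun h => hu h.symm

lemma card_incid {n : ℕ} (v : Fin n) : (incid n v).card = n - 1 := by
  rw [incid, Finset.card_image_of_injOn, Finset.card_erase_of_mem (mem_univ v),
    Finset.card_univ, Fintype.card_fin]
  intro a ha b hb hab
  rw [Sym2.eq_iff] at hab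
  rcases hab with ⟨_, h⟩ | ⟨h1, h2⟩
  · exact h
  · exact absurd h2 (Finset.mem_erase.1 ha).1

lemma isol_iff_avoid {n : ℕ} (v : Fin n) (G : SimpleGraph (Fin n)) :
    (∀ e ∈ incid n v, e ∉ G.edgeSet) ↔ ∀ u, ¬ G.Adj v u := by
  constructor
  · intro h u hadj
    refine h s(v, u) ?_ (G.mem_edgeSet.2 hadj)
    simp only [incid, mem_image]
    exact ⟨u, Finset.mem_erase.2 ⟨(G.ne_of_adj hadj).symm, mem_univ u⟩, rfl⟩
  · rintro h e he hmem
    simp only [incid, mem_image] at he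
    obtain ⟨u, _, rfl⟩ := he
    exact h u (G.mem_edgeSet.1 hmem)

lemma Pr_isol {n : ℕ} {p : ℝ} (v : Fin n) :
    erProb n p (fun G => ∀ u, ¬ G.Adj v u) = (1 - p) ^ (n - 1) := by
  rw [erProb_congr (fun G => (isol_iff_avoid v G).symm),
    erProb_avoid _ (incid_subset v), card_incid]

lemma Pr_pair_le {n : ℕ} {p : ℝ} (hp0 : 0 ≤ p) (hp1 : p ≤ 1) {u v : Fin n} (huv : u ≠ v) :
    erProb n p (fun G => (∀ a, ¬ G.Adj u a) ∧ (∀ a, ¬ G.Adj v a)) ≤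
      (1 - p) ^ (n - 1 + (n - 2)) := by
  classical
  set S := incid n u ∪ (incid n v).erase s(u, v) with hSdef
  have hsub : S ⊆ En n :=
    Finset.union_subset (incid_subset u) ((Finset.erase_subset _ _).trans (incid_subset v))
  have hmem : s(u, v) ∈ incid n v := by
    simp only [incid, mem_image]
    exact ⟨u, Finset.mem_erase.2 ⟨huv, mem_univ u⟩, Sym2.eq_swap⟩
  have hdisj : Disjoint (incid n u) ((incid n v).erase s(u, v)) := by
    rw [Finset.disjoint_left]
    rintro e he he'
    simp only [incid, mem_image, mem_erase] at he
    obtain ⟨a, ⟨ha, _⟩, rfl⟩ := he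
    rw [Finset.mem_erase] at he'
    obtain ⟨hne, he'⟩ := he'
    simp only [incid, mem_image, mem_erase] at he'
    obtain ⟨b, ⟨hb, _⟩, heq⟩ := he'
    rw [Sym2.eq_iff] at heq
    rcases heq with ⟨h1, h2⟩ | ⟨h1, h2⟩
    · exact huv h1.symm
    · exact hne (by rw [← h1])
  have hcard : S.card = (n - 1) + (n - 2) := by
    rw [hSdef, Finset.card_union_of_disjoint hdisj, card_incid,
      Finset.card_erase_of_mem hmem, card_incid]
    omega
  calc erProb n p (fun G => (∀ a, ¬ G.Adj u a) ∧ (∀ a, ¬ G.Adj v a))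
      ≤ erProb n p (fun G => ∀ e ∈ S, e ∉ G.edgeSet) := by
        refine erProb_mono hp0 hp1 fun G hG e he => ?_
        rw [hSdef, Finset.mem_union] at he
        rcases he with he | he
        · simp only [incid, mem_image] at he
          obtain ⟨a, _, rfl⟩ := he
          exact fun hm => hG.1 a (G.mem_edgeSet.1 hm)
        · have he2 := Finset.erase_subset _ _ he
          simp only [incid, mem_image] at he2
          obtain ⟨b, _, rfl⟩ := he2
          exact fun hm => hG.2 b (G.mem_edgeSet.1 hm)
    _ = (1 - p) ^ S.card := erProb_avoid S hsub
    _ = (1 - p) ^ ((n - 1) + (n - 2)) := by rw [hcard]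

/-- edges between `A` and its complement -/
def cutE (n : ℕ) (A : Finset (Fin n)) : Finset (Sym2 (Fin n)) :=
  (A ×ˢ Aᶜ).image (fun x => s(x.1, x.2))

lemma cutE_subset {n : ℕ} (A : Finset (Fin n)) : cutE n A ⊆ En n := by
  intro e he
  simp only [cutE, mem_image, Finset.mem_product, Finset.mem_compl] at he
  obtain ⟨⟨a, b⟩, ⟨ha, hb⟩, rfl⟩ := he
  simp only [En, mem_filter, mem_univ, true_and, Sym2.mk_isDiag_iff]
  exact fun h => hb (h ▸ ha)

lemma card_cutE {n : ℕ} (A : Finset (Fin n)) :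
    (cutE n A).card = A.card * (n - A.card) := by
  rw [cutE, Finset.card_image_of_injOn, Finset.card_product, Finset.card_compl,
    Fintype.card_fin]
  rintro ⟨a, b⟩ hab ⟨a', b'⟩ hab' heq
  simp only [Finset.mem_coe, Finset.mem_product, Finset.mem_compl] at hab hab'
  simp only [Sym2.eq_iff] at heq
  rcases heq with ⟨h1, h2⟩ | ⟨h1, h2⟩
  · simp [h1, h2]
  · exact absurd (h1 ▸ hab.1) (hab'.2)

lemma Pr_cut {n : ℕ} {p : ℝ} (A : Finset (Fin n)) :
    erProb n p (fun G => ∀ a ∈ A, ∀ b, b ∉ A → ¬ G.Adj a b) =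
      (1 - p) ^ (A.card * (n - A.card)) := by
  classical
  rw [← card_cutE, ← erProb_avoid _ (cutE_subset A)]
  refine erProb_congr fun G => ?_
  constructor
  · intro h e he hm
    simp only [cutE, mem_image, Finset.mem_product, Finset.mem_compl] at he
    obtain ⟨⟨a, b⟩, ⟨ha, hb⟩, rfl⟩ := he
    exact h a ha b hb (G.mem_edgeSet.1 hm)
  · intro h a ha b hb hadj
    refine h s(a, b) ?_ (G.mem_edgeSet.2 hadj)
    simp only [cutE, mem_image]
    exact ⟨(a, b), Finset.mem_product.2 ⟨ha, Finset.mem_compl.2 hb⟩, rfl⟩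


open Classical in
/-- number of isolated vertices -/
noncomputable def Xiso (n : ℕ) (G : SimpleGraph (Fin n)) : ℕ :=
  (univ.filter (fun v => ∀ u, ¬ G.Adj v u)).card

open Classical in
lemma Xiso_eq_sum (n : ℕ) (G : SimpleGraph (Fin n)) :
    (Xiso n G : ℝ) = ∑ v : Fin n, if (∀ u, ¬ G.Adj v u) then (1 : ℝ) else 0 := by
  classical
  rw [Xiso, Finset.card_filter]
  push_cast
  refine Finset.sum_congr rfl fun v _ => ?_
  split <;> norm_num

open Classical in
lemma sum_wt_X (n : ℕ) (p : ℝ) :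
    ∑ G : SimpleGraph (Fin n), wt n p G * (Xiso n G : ℝ)
      = n * (1 - p) ^ (n - 1) := by
  classical
  have key : ∀ G : SimpleGraph (Fin n), wt n p G * (Xiso n G : ℝ)
      = ∑ v : Fin n, if (∀ u, ¬ G.Adj v u) then wt n p G else 0 := by
    intro G
    rw [Xiso_eq_sum, Finset.mul_sum]
    refine Finset.sum_congr rfl fun v _ => ?_
    split <;> simp
  rw [Finset.sum_congr rfl fun G _ => key G, Finset.sum_comm]
  have : ∀ v : Fin n,
      (∑ G : SimpleGraph (Fin n), if (∀ u, ¬ G.Adj v u) then wt n p G else 0)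
        = (1 - p) ^ (n - 1) := by
    intro v
    have h2 : (erProb n p fun G => ∀ u, ¬ G.Adj v u) = (1 - p) ^ (n - 1) := Pr_isol v
    rw [erProb_def'] at h2
    rw [← h2]
    exact Finset.sum_congr rfl fun G _ => by by_cases h : ∀ u, ¬ G.Adj v u <;> simp [h]
  rw [Finset.sum_congr rfl fun v _ => this v, Finset.sum_const, Finset.card_univ,
    Fintype.card_fin, nsmul_eq_mul]

open Classical in
lemma sum_wt_X_sq (n : ℕ) (p : ℝ) :
    ∑ G : SimpleGraph (Fin n), wt n p G * (Xiso n G : ℝ) ^ 2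
      = ∑ v : Fin n, ∑ u : Fin n,
          erProb n p (fun G => (∀ a, ¬ G.Adj v a) ∧ (∀ a, ¬ G.Adj u a)) := by
  classical
  have key : ∀ G : SimpleGraph (Fin n), wt n p G * (Xiso n G : ℝ) ^ 2
      = ∑ v : Fin n, ∑ u : Fin n,
          if (∀ a, ¬ G.Adj v a) ∧ (∀ a, ¬ G.Adj u a) then wt n p G else 0 := by
    intro G
    rw [Xiso_eq_sum, sq, Finset.sum_mul_sum, Finset.mul_sum]
    refine Finset.sum_congr rfl fun v _ => ?_
    rw [Finset.mul_sum]
    refine Finset.sum_congr rfl fun u _ => ?_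
    by_cases h1 : ∀ a, ¬ G.Adj v a <;> by_cases h2 : ∀ a, ¬ G.Adj u a <;>
      simp [h1, h2]
  rw [Finset.sum_congr rfl fun G _ => key G, Finset.sum_comm]
  refine Finset.sum_congr rfl fun v _ => ?_
  rw [Finset.sum_comm]
  refine Finset.sum_congr rfl fun u _ => ?_
  rw [erProb_def']
  exact Finset.sum_congr rfl fun G _ => by
    by_cases h : (∀ a, ¬ G.Adj v a) ∧ (∀ a, ¬ G.Adj u a) <;> simp [h]

lemma sum_wt_X_sq_le (n : ℕ) {p : ℝ} (hp0 : 0 ≤ p) (hp1 : p ≤ 1) :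
    ∑ G : SimpleGraph (Fin n), wt n p G * (Xiso n G : ℝ) ^ 2
      ≤ n * (1 - p) ^ (n - 1) + n ^ 2 * (1 - p) ^ ((n - 1) + (n - 2)) := by
  classical
  rw [sum_wt_X_sq]
  have hbd : ∀ v : Fin n,
      (∑ u : Fin n, erProb n p (fun G => (∀ a, ¬ G.Adj v a) ∧ (∀ a, ¬ G.Adj u a)))
        ≤ (1 - p) ^ (n - 1) + n * (1 - p) ^ ((n - 1) + (n - 2)) := by
    intro v
    rw [← Finset.add_sum_erase _ _ (mem_univ v)]
    have h1 : erProb n p (fun G => (∀ a, ¬ G.Adj v a) ∧ (∀ a, ¬ G.Adj v a))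
        = (1 - p) ^ (n - 1) := by
      rw [erProb_congr (fun G => and_self_iff), Pr_isol]
    rw [h1]
    refine add_le_add le_rfl ?_
    calc ∑ u ∈ univ.erase v,
          erProb n p (fun G => (∀ a, ¬ G.Adj v a) ∧ (∀ a, ¬ G.Adj u a))
        ≤ ∑ u ∈ univ.erase v, (1 - p) ^ ((n - 1) + (n - 2)) := by
          refine Finset.sum_le_sum fun u hu => ?_
          exact Pr_pair_le hp0 hp1 (Finset.mem_erase.1 hu).1.symm
      _ ≤ n * (1 - p) ^ ((n - 1) + (n - 2)) := by
          rw [Finset.sum_const, nsmul_eq_mul]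
          refine mul_le_mul_of_nonneg_right ?_ (pow_nonneg (by linarith) _)
          rw [Finset.card_erase_of_mem (mem_univ v), Finset.card_univ, Fintype.card_fin]
          exact_mod_cast Nat.sub_le n 1
  calc ∑ v : Fin n, ∑ u : Fin n,
        erProb n p (fun G => (∀ a, ¬ G.Adj v a) ∧ (∀ a, ¬ G.Adj u a))
      ≤ ∑ _v : Fin n, ((1 - p) ^ (n - 1) + n * (1 - p) ^ ((n - 1) + (n - 2))) :=
        Finset.sum_le_sum fun v _ => hbd v
    _ = n * (1 - p) ^ (n - 1) + n ^ 2 * (1 - p) ^ ((n - 1) + (n - 2)) := by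
        rw [Finset.sum_const, Finset.card_univ, Fintype.card_fin, nsmul_eq_mul]
        ring


open Classical in
lemma PZ (n : ℕ) {p : ℝ} (hp0 : 0 ≤ p) (hp1 : p ≤ 1) :
    (∑ G : SimpleGraph (Fin n), wt n p G * (Xiso n G : ℝ)) ^ 2 ≤
      (∑ G : SimpleGraph (Fin n), wt n p G * (Xiso n G : ℝ) ^ 2) *
        erProb n p (fun G => Xiso n G ≠ 0) := by
  classical
  rw [erProb_def']
  refine Finset.sum_sq_le_sum_mul_sum_of_sq_eq_mul univ
    (fun G _ => mul_nonneg (wt_nonneg hp0 hp1 G) (sq_nonneg _))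
    (fun G _ => by split <;> [exact wt_nonneg hp0 hp1 G; exact le_rfl]) ?_
  intro G _
  by_cases h : Xiso n G = 0
  · simp [h]
  · rw [if_pos h]
    ring

lemma conn_no_isol {n : ℕ} (hn : 2 ≤ n) (G : SimpleGraph (Fin n))
    (hG : G.Connected) : Xiso n G = 0 := by
  classical
  rw [Xiso, Finset.card_eq_zero, Finset.filter_eq_empty_iff]
  intro v _ hiso
  have : ∃ u : Fin n, u ≠ v := by
    have h1 : 1 < Fintype.card (Fin n) := by rw [Fintype.card_fin]; omega
    exact Fintype.exists_ne_of_one_lt_card h1 v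
  obtain ⟨u, hu⟩ := this
  obtain ⟨w⟩ := hG.preconnected v u
  cases w with
  | nil => exact hu rfl
  | cons h _ => exact hiso _ h

lemma arith {A B c q : ℝ} (hA : 0 < A) (hc : 0 < c) (hc1 : c ≤ 1)
    (hAB : A ≤ B) (hB : B ≤ A + A ^ 2 / c) (hq : A ^ 2 ≤ B * q) :
    1 - q ≤ 1 / A + (1 - c) / c := by
  have hBpos : 0 < B := lt_of_lt_of_le hA hAB
  have hq' : A ^ 2 / B ≤ q := by
    rw [div_le_iff₀ hBpos]
    linarith [hq]
  have hBstar : 0 < A + A ^ 2 / c := by positivity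
  have hmono : A ^ 2 / (A + A ^ 2 / c) ≤ A ^ 2 / B :=
    div_le_div_of_nonneg_left (sq_nonneg A) hBpos hB
  have ht : 0 < A + c - A * c := by nlinarith
  have hAc : A * c ≤ A + c := by nlinarith
  have e1 : 1 - A ^ 2 / (A + A ^ 2 / c) = (A + c - A * c) / (A + c) := by
    have h2 : (0:ℝ) < A + c := by linarith
    field_simp
    ring
  have e2 : 1 / A + (1 - c) / c = (A + c - A * c) / (A * c) := by
    field_simp
    ring
  have e3 : (A + c - A * c) / (A + c) ≤ (A + c - A * c) / (A * c) :=
    div_le_div_of_nonneg_left (le_of_lt ht) (mul_pos hA hc) hAc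
  rw [e2]
  calc 1 - q ≤ 1 - A ^ 2 / B := by linarith
    _ ≤ 1 - A ^ 2 / (A + A ^ 2 / c) := by linarith
    _ = (A + c - A * c) / (A + c) := e1
    _ ≤ (A + c - A * c) / (A * c) := e3

lemma conn_le {n : ℕ} {p : ℝ} (hp0 : 0 ≤ p) (hp1 : p < 1) (hn : 2 ≤ n) :
    erProb n p (fun G => G.Connected) ≤
      1 / (n * (1 - p) ^ (n - 1)) + p / (1 - p) := by
  classical
  have hp1' : p ≤ 1 := le_of_lt hp1
  have hc : 0 < 1 - p := by linarith
  set A : ℝ := n * (1 - p) ^ (n - 1) with hAdef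
  set B : ℝ := ∑ G : SimpleGraph (Fin n), wt n p G * (Xiso n G : ℝ) ^ 2 with hBdef
  have hA : 0 < A := by
    refine mul_pos ?_ (pow_pos hc _)
    have hn0 : 0 < n := by omega
    exact_mod_cast hn0
  have hAB : A ≤ B := by
    rw [hAdef, ← sum_wt_X n p, hBdef]
    refine Finset.sum_le_sum fun G _ => ?_
    refine mul_le_mul_of_nonneg_left ?_ (wt_nonneg hp0 hp1' G)
    have : (Xiso n G : ℝ) = (Xiso n G : ℝ) ^ 1 := (pow_one _).symm
    rcases Nat.eq_zero_or_pos (Xiso n G) with h | h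
    · simp [h]
    · have h1 : (1 : ℝ) ≤ (Xiso n G : ℝ) := by exact_mod_cast h
      nlinarith
  have hB : B ≤ A + A ^ 2 / (1 - p) := by
    have h1 := sum_wt_X_sq_le n hp0 hp1'
    have h2 : (n : ℝ) ^ 2 * (1 - p) ^ ((n - 1) + (n - 2)) = A ^ 2 / (1 - p) := by
      rw [hAdef, eq_div_iff (ne_of_gt hc)]
      rw [mul_assoc, ← pow_succ, mul_pow, ← pow_mul]
      have he : (n - 1 + (n - 2) + 1) = (n - 1) * 2 := by omega
      rw [he]
    rw [hBdef]
    calc B ≤ n * (1 - p) ^ (n - 1) + n ^ 2 * (1 - p) ^ ((n - 1) + (n - 2)) := h1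
      _ = A + A ^ 2 / (1 - p) := by rw [h2, hAdef]
  have hq := PZ n hp0 hp1'
  have hq' : A ^ 2 ≤ B * erProb n p (fun G => Xiso n G ≠ 0) := by
    have hAs : A = ∑ G : SimpleGraph (Fin n), wt n p G * (Xiso n G : ℝ) := by
      rw [hAdef, sum_wt_X]
    rw [hAs, hBdef]
    exact hq
  have harith := arith hA hc (by linarith) hAB hB hq'
  have hcompl := erProb_compl (n := n) p (fun G => Xiso n G ≠ 0)
  have hmono : erProb n p (fun G => G.Connected) ≤
      erProb n p (fun G => ¬ Xiso n G ≠ 0) := by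
    refine erProb_mono hp0 hp1' fun G hG => ?_
    simp [conn_no_isol hn G hG]
  calc erProb n p (fun G => G.Connected)
      ≤ erProb n p (fun G => ¬ Xiso n G ≠ 0) := hmono
    _ = 1 - erProb n p (fun G => Xiso n G ≠ 0) := by linarith
    _ ≤ 1 / A + (1 - (1 - p)) / (1 - p) := harith
    _ = 1 / (n * (1 - p) ^ (n - 1)) + p / (1 - p) := by rw [hAdef]; ring_nf


lemma exists_cut {n : ℕ} (hn : 1 ≤ n) (G : SimpleGraph (Fin n)) (hG : ¬ G.Connected) :
    ∃ A ∈ univ.powerset.filter (fun A : Finset (Fin n) => A.Nonempty ∧ 2 * A.card ≤ n),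
      ∀ a ∈ A, ∀ b, b ∉ A → ¬ G.Adj a b := by
  classical
  have hne : Nonempty (Fin n) := ⟨⟨0, hn⟩⟩
  have hpre : ¬ G.Preconnected := fun h => hG ⟨h⟩
  rw [SimpleGraph.Preconnected] at hpre
  push_neg at hpre
  obtain ⟨v, u, hvu⟩ := hpre
  set C : Finset (Fin n) := univ.filter (fun x => G.Reachable v x) with hC
  have hvC : v ∈ C := by
    simp only [hC, mem_filter, mem_univ, true_and]
    exact SimpleGraph.Reachable.refl v
  have huC : u ∉ C := by simp [hC, hvu]
  have hcut : ∀ a ∈ C, ∀ b, b ∉ C → ¬ G.Adj a b := by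
    intro a ha b hb hadj
    refine hb ?_
    simp only [hC, mem_filter, mem_univ, true_and] at ha ⊢
    exact ha.trans hadj.reachable
  have hcardC : C.card + Cᶜ.card = n := by
    rw [Finset.card_add_card_compl, Fintype.card_fin]
  by_cases h : 2 * C.card ≤ n
  · exact ⟨C, Finset.mem_filter.2 ⟨Finset.mem_powerset.2 (Finset.subset_univ _),
      ⟨v, hvC⟩, h⟩, hcut⟩
  · refine ⟨Cᶜ, Finset.mem_filter.2 ⟨Finset.mem_powerset.2 (Finset.subset_univ _),
      ⟨u, Finset.mem_compl.2 huC⟩, by omega⟩, ?_⟩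
    intro a ha b hb hadj
    rw [Finset.mem_compl] at ha
    rw [Finset.mem_compl, not_not] at hb
    exact hcut b hb a ha hadj.symm

lemma one_add_le_exp (x : ℝ) : 1 + x ≤ Real.exp x := by
  have := Real.add_one_le_exp x
  linarith

lemma cut_term_le {n : ℕ} {p : ℝ} (hp0 : 0 ≤ p) (hp1 : p ≤ 1)
    (A : Finset (Fin n)) (hA : 2 * A.card ≤ n) :
    (1 - p) ^ (A.card * (n - A.card)) ≤ Real.exp (-(p * n) / 2) ^ A.card := by
  have hcard_le : A.card ≤ n := by
    have := Finset.card_le_card (Finset.subset_univ A)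
    rwa [Finset.card_univ, Fintype.card_fin] at this
  have h1 : (1 - p) ≤ Real.exp (-p) := by
    have := Real.add_one_le_exp (-p)
    linarith
  calc (1 - p) ^ (A.card * (n - A.card))
      ≤ Real.exp (-p) ^ (A.card * (n - A.card)) :=
        pow_le_pow_left₀ (by linarith) h1 _
    _ = Real.exp ((A.card * (n - A.card) : ℕ) * (-p)) := by
        rw [← Real.exp_nat_mul]
    _ ≤ Real.exp ((A.card : ℝ) * (-(p * n) / 2)) := by
        apply Real.exp_le_exp.2
        push_cast [Nat.cast_sub hcard_le]
        have h2 : (n : ℝ) / 2 ≤ (n : ℝ) - A.card := by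
          have : (2 * A.card : ℝ) ≤ n := by exact_mod_cast hA
          linarith
        have h3 : (A.card : ℝ) ≥ 0 := Nat.cast_nonneg _
        nlinarith [mul_nonneg (mul_nonneg hp0 h3)
          (by linarith : (0:ℝ) ≤ ((n : ℝ) - A.card) - (n : ℝ) / 2)]
    _ = Real.exp (-(p * n) / 2) ^ A.card := by
        rw [← Real.exp_nat_mul]

lemma disconn_le {n : ℕ} {p : ℝ} (hp0 : 0 ≤ p) (hp1 : p ≤ 1) (hn : 1 ≤ n) :
    erProb n p (fun G => ¬ G.Connected) ≤
      Real.exp ((n : ℝ) * Real.exp (-(p * n) / 2)) - 1 := by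
  classical
  set r := Real.exp (-(p * n) / 2) with hr
  have hr0 : 0 ≤ r := (Real.exp_pos _).le
  set 𝒜 := univ.powerset.filter (fun A : Finset (Fin n) => A.Nonempty ∧ 2 * A.card ≤ n)
    with h𝒜
  have step1 : erProb n p (fun G => ¬ G.Connected) ≤
      erProb n p (fun G => ∃ A ∈ 𝒜, ∀ a ∈ A, ∀ b, b ∉ A → ¬ G.Adj a b) :=
    erProb_mono hp0 hp1 fun G hG => exists_cut hn G hG
  have step2 : erProb n p (fun G => ∃ A ∈ 𝒜, ∀ a ∈ A, ∀ b, b ∉ A → ¬ G.Adj a b) ≤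
      ∑ A ∈ 𝒜, erProb n p (fun G => ∀ a ∈ A, ∀ b, b ∉ A → ¬ G.Adj a b) :=
    erProb_union_bound hp0 hp1 𝒜 _
  have step3 : ∑ A ∈ 𝒜, erProb n p (fun G => ∀ a ∈ A, ∀ b, b ∉ A → ¬ G.Adj a b)
      ≤ ∑ A ∈ 𝒜, r ^ A.card := by
    refine Finset.sum_le_sum fun A hA => ?_
    rw [Pr_cut A]
    rw [h𝒜, Finset.mem_filter] at hA
    exact cut_term_le hp0 hp1 A hA.2.2
  have step4 : ∑ A ∈ 𝒜, r ^ A.card ≤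
      ∑ A ∈ univ.powerset.filter (fun A : Finset (Fin n) => A.Nonempty), r ^ A.card := by
    refine Finset.sum_le_sum_of_subset_of_nonneg ?_ (fun A _ _ => pow_nonneg hr0 _)
    rw [h𝒜]
    intro A hA
    rw [Finset.mem_filter] at hA ⊢
    exact ⟨hA.1, hA.2.1⟩
  have step5 : ∑ A ∈ univ.powerset.filter (fun A : Finset (Fin n) => A.Nonempty), r ^ A.card
      = (1 + r) ^ n - 1 := by
    have hsplit := Finset.sum_filter_add_sum_filter_not (univ : Finset (Fin n)).powerset
      (fun A : Finset (Fin n) => A.Nonempty) (fun A => r ^ A.card)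
    have hall : ∑ A ∈ (univ : Finset (Fin n)).powerset, r ^ A.card = (1 + r) ^ n := by
      have h := Finset.sum_pow_mul_eq_add_pow r 1 (univ : Finset (Fin n))
      simp only [one_pow, mul_one] at h
      rw [h, Finset.card_univ, Fintype.card_fin, add_comm]
    have hempty : ∑ A ∈ (univ : Finset (Fin n)).powerset.filter
        (fun A : Finset (Fin n) => ¬ A.Nonempty), r ^ A.card = 1 := by
      have : (univ : Finset (Fin n)).powerset.filter
          (fun A : Finset (Fin n) => ¬ A.Nonempty) = {∅} := by
        ext A
        simp [Finset.not_nonempty_iff_eq_empty]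
      rw [this]
      simp
    linarith
  have step6 : (1 + r) ^ n - 1 ≤ Real.exp ((n : ℝ) * r) - 1 := by
    have h1 : (1 + r) ^ n ≤ Real.exp r ^ n :=
      pow_le_pow_left₀ (by linarith) (one_add_le_exp r) n
    rw [← Real.exp_nat_mul] at h1
    linarith
  linarith


lemma exp_neg_two_le {p : ℝ} (hp0 : 0 ≤ p) (hp : p ≤ 1/2) :
    Real.exp (-(2 * p)) ≤ 1 - p := by
  have h1 : 1 + 2 * p ≤ Real.exp (2 * p) := by
    have := Real.add_one_le_exp (2 * p); linarith
  have h2 : (0:ℝ) < 1 + 2 * p := by linarith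
  calc Real.exp (-(2 * p)) = 1 / Real.exp (2 * p) := by rw [Real.exp_neg, one_div]
    _ ≤ 1 / (1 + 2 * p) := one_div_le_one_div_of_le h2 h1
    _ ≤ 1 - p := by rw [div_le_iff₀ h2]; nlinarith

lemma dir1_bound {n : ℕ} {p : ℝ} (hn : 2 ≤ n) (hp0 : 0 ≤ p)
    (hple : p ≤ Real.log n / (4 * n)) :
    erProb n p (fun G => G.Connected) ≤
      (Real.exp ((1/2) * Real.log n))⁻¹ + Real.log n / (2 * n) := by
  have hnpos : (0:ℝ) < n := by exact_mod_cast (by omega : 0 < n)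
  have hn1 : (1:ℝ) ≤ n := by exact_mod_cast (by omega : 1 ≤ n)
  have hlog0 : 0 ≤ Real.log n := Real.log_nonneg hn1
  have hlogle : Real.log n ≤ n := by
    have := Real.log_le_sub_one_of_pos hnpos; linarith
  have hp14 : p ≤ 1/4 := by
    refine hple.trans ?_
    rw [div_le_iff₀ (by positivity : (0:ℝ) < 4 * n)]
    linarith
  have hp12 : p ≤ 1/2 := by linarith
  have hp1 : p < 1 := by linarith
  have hc : 0 < 1 - p := by linarith
  have hmain := conn_le hp0 hp1 hn
  have hpow : Real.exp (-(2 * p)) ^ (n - 1) ≤ (1 - p) ^ (n - 1) :=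
    pow_le_pow_left₀ (Real.exp_pos _).le (exp_neg_two_le hp0 hp12) _
  have hexp1 : Real.exp (((n - 1 : ℕ) : ℝ) * (-(2 * p))) = Real.exp (-(2 * p)) ^ (n - 1) :=
    Real.exp_nat_mul _ _
  have hcast : ((n - 1 : ℕ) : ℝ) ≤ n := by exact_mod_cast Nat.sub_le n 1
  have hcast0 : (0:ℝ) ≤ ((n - 1 : ℕ) : ℝ) := Nat.cast_nonneg _
  have hexp2 : -(1/2) * Real.log n ≤ ((n - 1 : ℕ) : ℝ) * (-(2 * p)) := by
    have h1 : ((n - 1 : ℕ) : ℝ) * (2 * p) ≤ (n : ℝ) * (2 * p) :=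
      mul_le_mul_of_nonneg_right hcast (by linarith)
    have h2 : (n : ℝ) * (2 * p) ≤ (n : ℝ) * (2 * (Real.log n / (4 * n))) :=
      mul_le_mul_of_nonneg_left (by linarith) (le_of_lt hnpos)
    have h3 : (n : ℝ) * (2 * (Real.log n / (4 * n))) = Real.log n / 2 := by
      field_simp
      ring
    nlinarith
  have hA : Real.exp ((1/2) * Real.log n) ≤ (n : ℝ) * (1 - p) ^ (n - 1) := by
    calc Real.exp ((1/2) * Real.log n)
        = Real.exp (Real.log n) * Real.exp (-(1/2) * Real.log n) := by
          rw [← Real.exp_add]; congr 1; ring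
      _ = n * Real.exp (-(1/2) * Real.log n) := by rw [Real.exp_log hnpos]
      _ ≤ n * Real.exp (((n - 1 : ℕ) : ℝ) * (-(2 * p))) :=
          mul_le_mul_of_nonneg_left (Real.exp_le_exp.2 hexp2) (le_of_lt hnpos)
      _ = n * Real.exp (-(2 * p)) ^ (n - 1) := by rw [hexp1]
      _ ≤ n * (1 - p) ^ (n - 1) := mul_le_mul_of_nonneg_left hpow (le_of_lt hnpos)
  have h1A : 1 / ((n : ℝ) * (1 - p) ^ (n - 1)) ≤ (Real.exp ((1/2) * Real.log n))⁻¹ := by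
    rw [one_div]
    exact inv_anti₀ (Real.exp_pos _) hA
  have hplast : p / (1 - p) ≤ Real.log n / (2 * n) := by
    have hd : p / (1 - p) ≤ 2 * p := by
      rw [div_le_iff₀ hc]; nlinarith
    have h3 : Real.log n / (2 * n) = 2 * (Real.log n / (4 * n)) := by
      field_simp
      ring
    linarith
  linarith

end ER

open ER Filter in
/-- **Erdős–Rényi**: `p₀(n) = log n / n` is a threshold function for `G_{n,p}` to be
connected (equivalently, to contain a spanning tree). -/
theorem connectivity_threshold (p : ℕ → ℝ) (hp : ∀ n, 0 ≤ p n ∧ p n ≤ 1) :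
    (Filter.Tendsto (fun n => p n / (Real.log n / n)) Filter.atTop (nhds 0) →
      Filter.Tendsto (fun n => erProb n (p n) (fun G => G.Connected))
        Filter.atTop (nhds 0)) ∧
    (Filter.Tendsto (fun n => p n / (Real.log n / n)) Filter.atTop Filter.atTop →
      Filter.Tendsto (fun n => erProb n (p n) (fun G => G.Connected))
        Filter.atTop (nhds 1)) := by
  constructor
  · -- subcritical
    intro h
    have hev1 : ∀ᶠ (m : ℕ) in atTop, p m ≤ Real.log m / (4 * m) := by
      have h4 := h.eventually (gt_mem_nhds (show (0:ℝ) < 1/4 by norm_num))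
      filter_upwards [h4, eventually_ge_atTop 2] with m hm hm2
      have hmpos : (0:ℝ) < m := by exact_mod_cast (by omega : 0 < m)
      have hm1 : (1:ℝ) < m := by exact_mod_cast (by omega : 1 < m)
      have hlogpos : 0 < Real.log m := Real.log_pos hm1
      have hdiv : 0 < Real.log m / m := by positivity
      rw [div_lt_iff₀ hdiv] at hm
      have he : (1:ℝ)/4 * (Real.log m / m) = Real.log m / (4 * m) := by
        field_simp
      linarith
    have hev : ∀ᶠ (m : ℕ) in atTop, erProb m (p m) (fun G => G.Connected) ≤
        (Real.exp ((1/2) * Real.log m))⁻¹ + Real.log m / (2 * m) := by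
      filter_upwards [hev1, eventually_ge_atTop 2] with m h1 h2
      exact dir1_bound h2 (hp m).1 h1
    have t1 : Tendsto (fun m : ℕ => (Real.exp ((1/2) * Real.log m))⁻¹) atTop (nhds 0) := by
      have ha : Tendsto (fun m : ℕ => (1/2) * Real.log m) atTop atTop :=
        (Real.tendsto_log_atTop.comp tendsto_natCast_atTop_atTop).const_mul_atTop (by norm_num)
      exact (Real.tendsto_exp_atTop.comp ha).inv_tendsto_atTop
    have t2 : Tendsto (fun m : ℕ => Real.log m / (2 * m)) atTop (nhds 0) := by
      have hb := (Real.tendsto_pow_log_div_mul_add_atTop 2 0 1 two_ne_zero).comp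
        tendsto_natCast_atTop_atTop
      refine hb.congr fun m => ?_
      simp
    have tb : Tendsto (fun m : ℕ =>
        (Real.exp ((1/2) * Real.log m))⁻¹ + Real.log m / (2 * m)) atTop (nhds 0) := by
      have := t1.add t2
      simpa using this
    refine tendsto_of_tendsto_of_tendsto_of_le_of_le' tendsto_const_nhds tb ?_ hev
    exact Filter.Eventually.of_forall fun m => erProb_nonneg (hp m).1 (hp m).2 _
  · -- supercritical
    intro h
    have hev1 : ∀ᶠ (m : ℕ) in atTop, 4 * Real.log m ≤ p m * m := by
      have h4 := h.eventually_ge_atTop 4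
      filter_upwards [h4, eventually_ge_atTop 2] with m hm hm2
      have hmpos : (0:ℝ) < m := by exact_mod_cast (by omega : 0 < m)
      have hm1 : (1:ℝ) < m := by exact_mod_cast (by omega : 1 < m)
      have hlogpos : 0 < Real.log m := Real.log_pos hm1
      have hdiv : 0 < Real.log m / m := by positivity
      rw [le_div_iff₀ hdiv] at hm
      have he : 4 * (Real.log m / m) * m = 4 * Real.log m := by
        field_simp
      nlinarith
    have hev : ∀ᶠ (m : ℕ) in atTop,
        1 - (Real.exp (Real.exp (-(Real.log m))) - 1) ≤
          erProb m (p m) (fun G => G.Connected) := by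
      filter_upwards [hev1, eventually_ge_atTop 1] with m h1 hm1
      have hmpos : (0:ℝ) < m := by exact_mod_cast (by omega : 0 < m)
      have hd := disconn_le (hp m).1 (hp m).2 hm1
      have hstep : (m : ℝ) * Real.exp (-(p m * m) / 2) ≤ Real.exp (-(Real.log m)) := by
        calc (m : ℝ) * Real.exp (-(p m * m) / 2)
            ≤ m * Real.exp (-(4 * Real.log m) / 2) :=
              mul_le_mul_of_nonneg_left (Real.exp_le_exp.2 (by linarith)) hmpos.le
          _ = Real.exp (Real.log m) * Real.exp (-(2 * Real.log m)) := by
              rw [Real.exp_log hmpos]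
              congr 1
              ring
          _ = Real.exp (-(Real.log m)) := by rw [← Real.exp_add]; congr 1; ring
      have hd2 : erProb m (p m) (fun G => ¬ G.Connected) ≤
          Real.exp (Real.exp (-(Real.log m))) - 1 := by
        refine hd.trans ?_
        have := Real.exp_le_exp.2 hstep
        linarith
      have hcompl := erProb_compl (n := m) (p m) (fun G => G.Connected)
      linarith
    have hub : ∀ᶠ (m : ℕ) in atTop, erProb m (p m) (fun G => G.Connected) ≤ 1 :=
      Filter.Eventually.of_forall fun m => erProb_le_one (hp m).1 (hp m).2 _
    have tlow : Tendsto (fun m : ℕ =>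
        1 - (Real.exp (Real.exp (-(Real.log m))) - 1)) atTop (nhds 1) := by
      have ha : Tendsto (fun m : ℕ => -(Real.log m)) atTop atBot :=
        tendsto_neg_atTop_atBot.comp
          (Real.tendsto_log_atTop.comp tendsto_natCast_atTop_atTop)
      have hb : Tendsto (fun m : ℕ => Real.exp (-(Real.log m))) atTop (nhds 0) :=
        Real.tendsto_exp_atBot.comp ha
      have hc : Tendsto (fun m : ℕ => Real.exp (Real.exp (-(Real.log m)))) atTop
          (nhds 1) := by
        have := (Real.continuous_exp.tendsto 0).comp hb
        simpa [Function.comp_def] using this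
      have hone : Tendsto (fun _ : ℕ => (1:ℝ)) atTop (nhds 1) := tendsto_const_nhds
      have := hone.sub (hc.sub hone)
      simpa using this
    exact tendsto_of_tendsto_of_tendsto_of_le_of_le' tlow tendsto_const_nhds hev hub
end

section
/- p₀(n) = 1/n is a threshold function for the property that G_{n,p} contains a triangle: if p ≪ 1/n then P(G_{n,p} contains a triangle) → 0, and if p ≫ 1/n then P(G_{n,p} contains a triangle) → 1. -/
open Finset

namespace TriThresh

/-! ### Abstract weighted-powerset probability lemmas -/

lemma sum_powerset_weight {α : Type*} [DecidableEq α] (A : Finset α) (q : ℝ) :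
    ∑ s ∈ A.powerset, q ^ s.card * (1 - q) ^ (A.card - s.card) = 1 := by
  have h := Finset.prod_add (fun _ : α => q) (fun _ : α => 1 - q) A
  simp only [add_sub_cancel, Finset.prod_const, one_pow] at h
  conv_rhs => rw [h]
  apply Finset.sum_congr rfl
  intro s hs
  rw [Finset.mem_powerset] at hs
  rw [Finset.card_sdiff_of_subset hs]

lemma sum_powerset_weight_event {α : Type*} [DecidableEq α] (A T : Finset α) (hT : T ⊆ A)
    (q : ℝ) :
    ∑ s ∈ A.powerset, (if T ⊆ s then q ^ s.card * (1 - q) ^ (A.card - s.card) else 0)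
      = q ^ T.card := by
  rw [Finset.sum_ite, Finset.sum_const_zero, add_zero]
  have key : ∑ s ∈ (A.powerset.filter (fun s => T ⊆ s)),
      q ^ s.card * (1 - q) ^ (A.card - s.card)
      = ∑ u ∈ (A \ T).powerset, q ^ (u.card + T.card) * (1 - q) ^ ((A \ T).card - u.card) := by
    apply Finset.sum_nbij' (fun s => s \ T) (fun u => u ∪ T)
    · intro s hs
      simp only [mem_filter, mem_powerset] at hs
      exact Finset.mem_powerset.2 (Finset.sdiff_subset_sdiff hs.1 (le_refl _))
    · intro u hu
      rw [Finset.mem_powerset] at hu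
      simp only [mem_filter, mem_powerset]
      constructor
      · exact Finset.union_subset (hu.trans Finset.sdiff_subset) hT
      · exact Finset.subset_union_right
    · intro s hs
      simp only [mem_filter, mem_powerset] at hs
      exact Finset.sdiff_union_of_subset hs.2
    · intro u hu
      rw [Finset.mem_powerset] at hu
      apply Finset.union_sdiff_cancel_right
      exact Finset.disjoint_left.2 fun x hx hxT => (Finset.mem_sdiff.1 (hu hx)).2 hxT
    · intro s hs
      simp only [mem_filter, mem_powerset] at hs
      have h1 : (s \ T).card = s.card - T.card := Finset.card_sdiff_of_subset hs.2
      have h2 : T.card ≤ s.card := Finset.card_le_card hs.2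
      have h3 : s.card ≤ A.card := Finset.card_le_card hs.1
      have h4 : (A \ T).card = A.card - T.card := Finset.card_sdiff_of_subset hT
      congr 1
      · congr 1; omega
      · congr 1; omega
  rw [key]
  have : ∀ u ∈ (A \ T).powerset, q ^ (u.card + T.card) * (1 - q) ^ ((A \ T).card - u.card)
      = q ^ T.card * (q ^ u.card * (1 - q) ^ ((A \ T).card - u.card)) := by
    intro u _; ring
  rw [Finset.sum_congr rfl this, ← Finset.mul_sum, sum_powerset_weight, mul_one]

/-! ### Translation from graphs to edge subsets -/

open Classical in
lemma sum_graphs (n : ℕ) (F : Finset (Sym2 (Fin n)) → ℝ) :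
    ∑ G : SimpleGraph (Fin n), F G.edgeFinset
      = ∑ s ∈ ((⊤ : SimpleGraph (Fin n)).edgeFinset).powerset, F s := by
  refine Finset.sum_nbij' (i := fun G => G.edgeFinset)
    (j := fun s => SimpleGraph.fromEdgeSet (↑s : Set (Sym2 (Fin n)))) ?_ ?_ ?_ ?_ ?_
  · intro G _
    exact Finset.mem_powerset.2 (SimpleGraph.edgeFinset_mono le_top)
  · intro s _
    exact Finset.mem_univ _
  · intro G _
    show SimpleGraph.fromEdgeSet (↑G.edgeFinset : Set (Sym2 (Fin n))) = G
    rw [SimpleGraph.coe_edgeFinset, SimpleGraph.fromEdgeSet_edgeSet]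
  · intro s hs
    rw [Finset.mem_powerset] at hs
    have hnd : ∀ e ∈ s, ¬ e.IsDiag := by
      intro e he
      have := hs he
      rw [SimpleGraph.mem_edgeFinset, SimpleGraph.edgeSet_top] at this
      exact this
    ext e
    simp only [SimpleGraph.mem_edgeFinset, SimpleGraph.edgeSet_fromEdgeSet,
      Set.mem_diff, Finset.mem_coe, Set.mem_setOf_eq, and_iff_left_iff_imp]
    exact fun hmem => hnd e hmem
  · intro G _
    rfl

/-! ### Triangles and triples -/

variable {n : ℕ}

def Vset (v : Fin n × Fin n × Fin n) : Finset (Fin n) := {v.1, v.2.1, v.2.2}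

def tri (v : Fin n × Fin n × Fin n) : Finset (Sym2 (Fin n)) :=
  {s(v.1, v.2.1), s(v.1, v.2.2), s(v.2.1, v.2.2)}

def Dst (n : ℕ) : Finset (Fin n × Fin n × Fin n) :=
  univ.filter (fun v => v.1 ≠ v.2.1 ∧ v.1 ≠ v.2.2 ∧ v.2.1 ≠ v.2.2)

lemma mem_Dst {v : Fin n × Fin n × Fin n} :
    v ∈ Dst n ↔ v.1 ≠ v.2.1 ∧ v.1 ≠ v.2.2 ∧ v.2.1 ≠ v.2.2 := by
  simp [Dst]

lemma mem_tri {v : Fin n × Fin n × Fin n} (hv : v ∈ Dst n) {e : Sym2 (Fin n)} :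
    e ∈ tri v ↔ ¬ e.IsDiag ∧ ∀ x ∈ e, x ∈ Vset v := by
  rw [mem_Dst] at hv
  obtain ⟨h1, h2, h3⟩ := hv
  induction e using Sym2.inductionOn with
  | hf x y =>
    simp only [tri, Vset, Finset.mem_insert, Finset.mem_singleton, Sym2.eq_iff,
      Sym2.isDiag_iff_proj_eq, Sym2.mem_iff]
    constructor
    · rintro (⟨rfl, rfl⟩ | ⟨rfl, rfl⟩ | ⟨rfl, rfl⟩ | ⟨rfl, rfl⟩ | ⟨rfl, rfl⟩ | ⟨rfl, rfl⟩) <;>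
        simp_all <;> tauto
    · rintro ⟨hxy, hall⟩
      have hx := hall x (Or.inl rfl)
      have hy := hall y (Or.inr rfl)
      rcases hx with rfl | rfl | rfl <;> rcases hy with rfl | rfl | rfl <;> tauto

lemma card_tri {v : Fin n × Fin n × Fin n} (hv : v ∈ Dst n) : (tri v).card = 3 := by
  rw [mem_Dst] at hv
  obtain ⟨h1, h2, h3⟩ := hv
  rw [tri, Finset.card_insert_of_notMem, Finset.card_insert_of_notMem, Finset.card_singleton]
  · simp only [Finset.mem_singleton, Sym2.eq_iff]
    tauto
  · simp only [Finset.mem_insert, Finset.mem_singleton, Sym2.eq_iff]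
    tauto

lemma card_Vset {v : Fin n × Fin n × Fin n} (hv : v ∈ Dst n) : (Vset v).card = 3 := by
  rw [mem_Dst] at hv
  obtain ⟨h1, h2, h3⟩ := hv
  rw [Vset, Finset.card_insert_of_notMem, Finset.card_insert_of_notMem,
    Finset.card_singleton] <;> simp <;> tauto

open Classical in
def K (n : ℕ) : Finset (Sym2 (Fin n)) := (⊤ : SimpleGraph (Fin n)).edgeFinset

lemma card_K (n : ℕ) : (K n).card = n.choose 2 := by
  classical
  have h : K n = (⊤ : SimpleGraph (Fin n)).edgeFinset := by
    ext e; simp only [K, SimpleGraph.mem_edgeFinset]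
  rw [h, SimpleGraph.card_edgeFinset_top_eq_card_choose_two, Fintype.card_fin]

noncomputable def w (n : ℕ) (p : ℝ) (s : Finset (Sym2 (Fin n))) : ℝ :=
  p ^ s.card * (1 - p) ^ ((K n).card - s.card)

lemma tri_subset_K {v : Fin n × Fin n × Fin n} (hv : v ∈ Dst n) : tri v ⊆ K n := by
  classical
  intro e he
  rw [mem_tri hv] at he
  simp only [K, SimpleGraph.mem_edgeFinset, SimpleGraph.edgeSet_top, Set.mem_setOf_eq]
  exact he.1

lemma sym2_exists {α : Type*} (e : Sym2 α) : ∃ x y, e = s(x, y) := by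
  induction e using Sym2.inductionOn with
  | hf x y => exact ⟨x, y, rfl⟩

lemma Vset_eq_of_two_shared {u v : Fin n × Fin n × Fin n} (hu : u ∈ Dst n) (hv : v ∈ Dst n)
    {e1 e2 : Sym2 (Fin n)} (h1u : e1 ∈ tri u) (h1v : e1 ∈ tri v) (h2u : e2 ∈ tri u)
    (h2v : e2 ∈ tri v) (hne : e1 ≠ e2) : Vset u = Vset v := by
  obtain ⟨x1, y1, rfl⟩ := sym2_exists e1
  obtain ⟨x2, y2, rfl⟩ := sym2_exists e2
  rw [mem_tri hu] at h1u h2u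
  rw [mem_tri hv] at h1v h2v
  have hxy1 : x1 ≠ y1 := by simpa [Sym2.isDiag_iff_proj_eq] using h1u.1
  have hxy2 : x2 ≠ y2 := by simpa [Sym2.isDiag_iff_proj_eq] using h2u.1
  set U : Finset (Fin n) := {x1, y1, x2, y2} with hU
  have hUu : U ⊆ Vset u := by
    intro x hx
    simp only [hU, Finset.mem_insert, Finset.mem_singleton] at hx
    rcases hx with rfl | rfl | rfl | rfl
    · exact h1u.2 x (Sym2.mem_mk_left _ _)
    · exact h1u.2 x (Sym2.mem_mk_right _ _)
    · exact h2u.2 x (Sym2.mem_mk_left _ _)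
    · exact h2u.2 x (Sym2.mem_mk_right _ _)
  have hUv : U ⊆ Vset v := by
    intro x hx
    simp only [hU, Finset.mem_insert, Finset.mem_singleton] at hx
    rcases hx with rfl | rfl | rfl | rfl
    · exact h1v.2 x (Sym2.mem_mk_left _ _)
    · exact h1v.2 x (Sym2.mem_mk_right _ _)
    · exact h2v.2 x (Sym2.mem_mk_left _ _)
    · exact h2v.2 x (Sym2.mem_mk_right _ _)
  have hcard : 3 ≤ U.card := by
    by_contra hlt
    push_neg at hlt
    have hP1 : ({x1, y1} : Finset (Fin n)) ⊆ U := by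
      intro x hx; simp only [Finset.mem_insert, Finset.mem_singleton] at hx
      simp only [hU, Finset.mem_insert, Finset.mem_singleton]; tauto
    have hP2 : ({x2, y2} : Finset (Fin n)) ⊆ U := by
      intro x hx; simp only [Finset.mem_insert, Finset.mem_singleton] at hx
      simp only [hU, Finset.mem_insert, Finset.mem_singleton]; tauto
    have hc1 : ({x1, y1} : Finset (Fin n)).card = 2 := Finset.card_pair hxy1
    have hc2 : ({x2, y2} : Finset (Fin n)).card = 2 := Finset.card_pair hxy2
    have e1eq : ({x1, y1} : Finset (Fin n)) = U :=
      Finset.eq_of_subset_of_card_le hP1 (by omega)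
    have e2eq : ({x2, y2} : Finset (Fin n)) = U :=
      Finset.eq_of_subset_of_card_le hP2 (by omega)
    have heq : ({x1, y1} : Finset (Fin n)) = {x2, y2} := e1eq.trans e2eq.symm
    have hx2 : x2 = x1 ∨ x2 = y1 := by
      have : x2 ∈ ({x1, y1} : Finset (Fin n)) := heq ▸ Finset.mem_insert_self _ _
      simpa using this
    have hy2 : y2 = x1 ∨ y2 = y1 := by
      have : y2 ∈ ({x1, y1} : Finset (Fin n)) := heq ▸ (by simp)
      simpa using this
    apply hne
    rw [Sym2.eq_iff]
    rcases hx2 with h2 | h2 <;> rcases hy2 with h3 | h3 <;> subst h2 <;> subst h3 <;>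
      first
        | exact absurd rfl hxy2
        | exact Or.inl ⟨rfl, rfl⟩
        | exact Or.inr ⟨rfl, rfl⟩
  have h1 : U = Vset u := Finset.eq_of_subset_of_card_le hUu (by rw [card_Vset hu]; omega)
  have h2 : U = Vset v := Finset.eq_of_subset_of_card_le hUv (by rw [card_Vset hv]; omega)
  rw [← h1, h2]

lemma tri_eq_of_two_shared {u v : Fin n × Fin n × Fin n} (hu : u ∈ Dst n) (hv : v ∈ Dst n)
    {e1 e2 : Sym2 (Fin n)} (h1u : e1 ∈ tri u) (h1v : e1 ∈ tri v) (h2u : e2 ∈ tri u)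
    (h2v : e2 ∈ tri v) (hne : e1 ≠ e2) : tri u = tri v := by
  have h := Vset_eq_of_two_shared hu hv h1u h1v h2u h2v hne
  ext e
  rw [mem_tri hu, mem_tri hv, h]

lemma coords_of_shared {u v : Fin n × Fin n × Fin n} (hu : u ∈ Dst n) (hv : v ∈ Dst n)
    {e : Sym2 (Fin n)} (heu : e ∈ tri u) (hev : e ∈ tri v) :
    (v.1 ∈ Vset u ∧ v.2.1 ∈ Vset u) ∨ (v.1 ∈ Vset u ∧ v.2.2 ∈ Vset u) ∨
      (v.2.1 ∈ Vset u ∧ v.2.2 ∈ Vset u) := by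
  obtain ⟨x, y, rfl⟩ := sym2_exists e
  rw [mem_tri hu] at heu
  rw [mem_tri hv] at hev
  have hxy : x ≠ y := by simpa [Sym2.isDiag_iff_proj_eq] using heu.1
  have hxu : x ∈ Vset u := heu.2 x (Sym2.mem_mk_left _ _)
  have hyu : y ∈ Vset u := heu.2 y (Sym2.mem_mk_right _ _)
  have hxv : x ∈ Vset v := hev.2 x (Sym2.mem_mk_left _ _)
  have hyv : y ∈ Vset v := hev.2 y (Sym2.mem_mk_right _ _)
  simp only [Vset, Finset.mem_insert, Finset.mem_singleton] at hxv hyv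
  rcases hxv with h | h | h <;> rcases hyv with h' | h' | h' <;> subst h <;> subst h' <;>
    first
      | exact absurd rfl hxy
      | exact Or.inl ⟨hxu, hyu⟩
      | exact Or.inl ⟨hyu, hxu⟩
      | exact Or.inr (Or.inl ⟨hxu, hyu⟩)
      | exact Or.inr (Or.inl ⟨hyu, hxu⟩)
      | exact Or.inr (Or.inr ⟨hxu, hyu⟩)
      | exact Or.inr (Or.inr ⟨hyu, hxu⟩)

lemma coords_of_tri_eq {u v : Fin n × Fin n × Fin n} (hu : u ∈ Dst n)
    (h : tri u = tri v) : v.1 ∈ Vset u ∧ v.2.1 ∈ Vset u ∧ v.2.2 ∈ Vset u := by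
  have h1 : s(v.1, v.2.1) ∈ tri u := by rw [h, tri]; simp
  have h2 : s(v.1, v.2.2) ∈ tri u := by rw [h, tri]; simp
  rw [mem_tri hu] at h1 h2
  exact ⟨h1.2 _ (Sym2.mem_mk_left _ _), h1.2 _ (Sym2.mem_mk_right _ _),
    h2.2 _ (Sym2.mem_mk_right _ _)⟩

lemma card_Dst_le (n : ℕ) : (Dst n).card ≤ n ^ 3 := by
  calc (Dst n).card ≤ (univ : Finset (Fin n × Fin n × Fin n)).card := Finset.card_filter_le _ _
    _ = n ^ 3 := by simp [Fintype.card_prod]; ring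

lemma card_Dst_ge (n : ℕ) : n ^ 3 ≤ (Dst n).card + 3 * n ^ 2 := by
  classical
  have htotal := Finset.card_filter_add_card_filter_not
    (s := (univ : Finset (Fin n × Fin n × Fin n)))
    (p := fun v => v.1 ≠ v.2.1 ∧ v.1 ≠ v.2.2 ∧ v.2.1 ≠ v.2.2)
  have huniv : (univ : Finset (Fin n × Fin n × Fin n)).card = n ^ 3 := by
    simp [Fintype.card_prod]; ring
  have hneg : (univ.filter (fun v : Fin n × Fin n × Fin n =>
      ¬(v.1 ≠ v.2.1 ∧ v.1 ≠ v.2.2 ∧ v.2.1 ≠ v.2.2))).card ≤ 3 * n ^ 2 := by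
    have hsub : (univ.filter (fun v : Fin n × Fin n × Fin n =>
        ¬(v.1 ≠ v.2.1 ∧ v.1 ≠ v.2.2 ∧ v.2.1 ≠ v.2.2))) ⊆
        (univ.filter (fun v : Fin n × Fin n × Fin n => v.1 = v.2.1)) ∪
        (univ.filter (fun v : Fin n × Fin n × Fin n => v.1 = v.2.2)) ∪
        (univ.filter (fun v : Fin n × Fin n × Fin n => v.2.1 = v.2.2)) := by
      intro v hv
      simp only [Finset.mem_filter, Finset.mem_union, Finset.mem_univ, true_and] at hv ⊢
      tauto
    have h1 : (univ.filter (fun v : Fin n × Fin n × Fin n => v.1 = v.2.1)).card ≤ n ^ 2 := by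
      have := Finset.card_le_card_of_injOn (f := fun v : Fin n × Fin n × Fin n => (v.1, v.2.2))
        (s := univ.filter (fun v : Fin n × Fin n × Fin n => v.1 = v.2.1))
        (t := (univ : Finset (Fin n × Fin n)))
        (fun v _ => Finset.mem_univ _) ?_
      · calc _ ≤ _ := this
          _ = n ^ 2 := by simp [Fintype.card_prod]; ring
      · intro a ha b hb hab
        simp only [Finset.mem_coe, Finset.mem_filter] at ha hb
        simp only [Prod.mk.injEq] at hab
        obtain ⟨a1, a2, a3⟩ := a
        obtain ⟨b1, b2, b3⟩ := b
        simp_all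
    have h2 : (univ.filter (fun v : Fin n × Fin n × Fin n => v.1 = v.2.2)).card ≤ n ^ 2 := by
      have := Finset.card_le_card_of_injOn (f := fun v : Fin n × Fin n × Fin n => (v.1, v.2.1))
        (s := univ.filter (fun v : Fin n × Fin n × Fin n => v.1 = v.2.2))
        (t := (univ : Finset (Fin n × Fin n)))
        (fun v _ => Finset.mem_univ _) ?_
      · calc _ ≤ _ := this
          _ = n ^ 2 := by simp [Fintype.card_prod]; ring
      · intro a ha b hb hab
        simp only [Finset.mem_coe, Finset.mem_filter] at ha hb
        simp only [Prod.mk.injEq] at hab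
        obtain ⟨a1, a2, a3⟩ := a
        obtain ⟨b1, b2, b3⟩ := b
        simp_all
    have h3 : (univ.filter (fun v : Fin n × Fin n × Fin n => v.2.1 = v.2.2)).card ≤ n ^ 2 := by
      have := Finset.card_le_card_of_injOn (f := fun v : Fin n × Fin n × Fin n => (v.1, v.2.1))
        (s := univ.filter (fun v : Fin n × Fin n × Fin n => v.2.1 = v.2.2))
        (t := (univ : Finset (Fin n × Fin n)))
        (fun v _ => Finset.mem_univ _) ?_
      · calc _ ≤ _ := this
          _ = n ^ 2 := by simp [Fintype.card_prod]; ring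
      · intro a ha b hb hab
        simp only [Finset.mem_coe, Finset.mem_filter] at ha hb
        simp only [Prod.mk.injEq] at hab
        obtain ⟨a1, a2, a3⟩ := a
        obtain ⟨b1, b2, b3⟩ := b
        simp_all
    calc _ ≤ _ := Finset.card_le_card hsub
      _ ≤ _ := (Finset.card_union_le _ _).trans
          (add_le_add (Finset.card_union_le _ _) le_rfl)
      _ ≤ 3 * n ^ 2 := by omega
  have : (Dst n).card = (univ.filter (fun v : Fin n × Fin n × Fin n =>
      v.1 ≠ v.2.1 ∧ v.1 ≠ v.2.2 ∧ v.2.1 ≠ v.2.2)).card := by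
    rfl
  omega


def Bset (u : Fin n × Fin n × Fin n) : Finset (Fin n × Fin n × Fin n) :=
  (Vset u ×ˢ (Vset u ×ˢ (univ : Finset (Fin n)))) ∪
  (Vset u ×ˢ ((univ : Finset (Fin n)) ×ˢ Vset u)) ∪
  ((univ : Finset (Fin n)) ×ˢ (Vset u ×ˢ Vset u))

def Cset (u : Fin n × Fin n × Fin n) : Finset (Fin n × Fin n × Fin n) :=
  Vset u ×ˢ (Vset u ×ˢ Vset u)

lemma card_Vset_le (u : Fin n × Fin n × Fin n) : (Vset u).card ≤ 3 := by
  have h1 := Finset.card_insert_le u.1 ({u.2.1, u.2.2} : Finset (Fin n))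
  have h2 := Finset.card_insert_le u.2.1 ({u.2.2} : Finset (Fin n))
  have h3 : ({u.2.2} : Finset (Fin n)).card = 1 := Finset.card_singleton _
  rw [Vset]
  omega

lemma card_Bset_le (u : Fin n × Fin n × Fin n) : (Bset u).card ≤ 27 * n := by
  have hV := card_Vset_le u
  have hn : (univ : Finset (Fin n)).card = n := by simp
  have c1 : (Vset u ×ˢ (Vset u ×ˢ (univ : Finset (Fin n)))).card ≤ 9 * n := by
    rw [Finset.card_product, Finset.card_product, hn]
    calc #(Vset u) * (#(Vset u) * n) ≤ 3 * (3 * n) := by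
          exact Nat.mul_le_mul hV (Nat.mul_le_mul hV le_rfl)
      _ = 9 * n := by ring
  have c2 : (Vset u ×ˢ ((univ : Finset (Fin n)) ×ˢ Vset u)).card ≤ 9 * n := by
    rw [Finset.card_product, Finset.card_product, hn]
    calc #(Vset u) * (n * #(Vset u)) ≤ 3 * (n * 3) := by
          exact Nat.mul_le_mul hV (Nat.mul_le_mul le_rfl hV)
      _ = 9 * n := by ring
  have c3 : ((univ : Finset (Fin n)) ×ˢ (Vset u ×ˢ Vset u)).card ≤ 9 * n := by
    rw [Finset.card_product, Finset.card_product, hn]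
    calc n * (#(Vset u) * #(Vset u)) ≤ n * (3 * 3) := by
          exact Nat.mul_le_mul le_rfl (Nat.mul_le_mul hV hV)
      _ = 9 * n := by ring
  calc (Bset u).card ≤ _ + _ := Finset.card_union_le _ _
    _ ≤ (_ + _) + _ := add_le_add (Finset.card_union_le _ _) le_rfl
    _ ≤ 27 * n := by omega

lemma card_Cset_le (u : Fin n × Fin n × Fin n) : (Cset u).card ≤ 27 := by
  have hV := card_Vset_le u
  rw [Cset, Finset.card_product, Finset.card_product]
  calc #(Vset u) * (#(Vset u) * #(Vset u)) ≤ 3 * (3 * 3) :=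
        Nat.mul_le_mul hV (Nat.mul_le_mul hV hV)
    _ = 27 := by norm_num

lemma mem_Bset {u v : Fin n × Fin n × Fin n}
    (h : (v.1 ∈ Vset u ∧ v.2.1 ∈ Vset u) ∨ (v.1 ∈ Vset u ∧ v.2.2 ∈ Vset u) ∨
      (v.2.1 ∈ Vset u ∧ v.2.2 ∈ Vset u)) : v ∈ Bset u := by
  simp only [Bset, Finset.mem_union, Finset.mem_product, Finset.mem_univ, true_and, and_true]
  tauto

lemma mem_Cset {u v : Fin n × Fin n × Fin n}
    (h : v.1 ∈ Vset u ∧ v.2.1 ∈ Vset u ∧ v.2.2 ∈ Vset u) : v ∈ Cset u := by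
  simp only [Cset, Finset.mem_product]
  tauto



/-! ### erProb computations -/

open Classical in
lemma erProb_eq (n : ℕ) (p : ℝ) :
    erProb n p (fun G => ∃ a b c : Fin n, G.Adj a b ∧ G.Adj a c ∧ G.Adj b c)
      = ∑ s ∈ (K n).powerset, (if ∃ v ∈ Dst n, tri v ⊆ s then w n p s else 0) := by
  rw [erProb, show K n = (⊤ : SimpleGraph (Fin n)).edgeFinset from rfl,
    ← sum_graphs n (fun s => if ∃ v ∈ Dst n, tri v ⊆ s then w n p s else 0)]
  apply Finset.sum_congr rfl
  intro G _
  have hcard : Nat.card G.edgeSet = G.edgeFinset.card := by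
    rw [Nat.card_eq_fintype_card, SimpleGraph.edgeFinset_card]
  have hiff : (∃ a b c : Fin n, G.Adj a b ∧ G.Adj a c ∧ G.Adj b c) ↔
      ∃ v ∈ Dst n, tri v ⊆ G.edgeFinset := by
    constructor
    · rintro ⟨a, b, c, hab, hac, hbc⟩
      refine ⟨(a, b, c), mem_Dst.2 ⟨hab.ne, hac.ne, hbc.ne⟩, ?_⟩
      intro e he
      simp only [tri, Finset.mem_insert, Finset.mem_singleton] at he
      rw [SimpleGraph.mem_edgeFinset]
      rcases he with rfl | rfl | rfl
      · exact hab
      · exact hac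
      · exact hbc
    · rintro ⟨v, hv, hsub⟩
      refine ⟨v.1, v.2.1, v.2.2, ?_, ?_, ?_⟩
      · have : s(v.1, v.2.1) ∈ G.edgeFinset := hsub (by simp [tri])
        rwa [SimpleGraph.mem_edgeFinset, SimpleGraph.mem_edgeSet] at this
      · have : s(v.1, v.2.2) ∈ G.edgeFinset := hsub (by simp [tri])
        rwa [SimpleGraph.mem_edgeFinset, SimpleGraph.mem_edgeSet] at this
      · have : s(v.2.1, v.2.2) ∈ G.edgeFinset := hsub (by simp [tri])
        rwa [SimpleGraph.mem_edgeFinset, SimpleGraph.mem_edgeSet] at this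
  simp only [hiff, hcard, w, card_K]

lemma w_nonneg {n : ℕ} {p : ℝ} (hp0 : 0 ≤ p) (hp1 : p ≤ 1) (s : Finset (Sym2 (Fin n))) :
    0 ≤ w n p s :=
  mul_nonneg (pow_nonneg hp0 _) (pow_nonneg (by linarith) _)

open Classical in
lemma erProbTri_nonneg (n : ℕ) (p : ℝ) (hp0 : 0 ≤ p) (hp1 : p ≤ 1) :
    0 ≤ erProb n p (fun G => ∃ a b c : Fin n, G.Adj a b ∧ G.Adj a c ∧ G.Adj b c) := by
  rw [erProb_eq]
  apply Finset.sum_nonneg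
  intro s _
  split_ifs
  · exact w_nonneg hp0 hp1 s
  · exact le_refl 0

open Classical in
lemma erProbTri_le_one (n : ℕ) (p : ℝ) (hp0 : 0 ≤ p) (hp1 : p ≤ 1) :
    erProb n p (fun G => ∃ a b c : Fin n, G.Adj a b ∧ G.Adj a c ∧ G.Adj b c) ≤ 1 := by
  rw [erProb_eq]
  calc ∑ s ∈ (K n).powerset, (if ∃ v ∈ Dst n, tri v ⊆ s then w n p s else 0)
      ≤ ∑ s ∈ (K n).powerset, w n p s := by
        apply Finset.sum_le_sum
        intro s _
        split_ifs
        · exact le_refl _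
        · exact w_nonneg hp0 hp1 s
    _ = 1 := by
        simp only [w]
        exact sum_powerset_weight (K n) p

open Classical in
lemma erProbTri_le_cube (n : ℕ) (p : ℝ) (hp0 : 0 ≤ p) (hp1 : p ≤ 1) :
    erProb n p (fun G => ∃ a b c : Fin n, G.Adj a b ∧ G.Adj a c ∧ G.Adj b c)
      ≤ (n : ℝ) ^ 3 * p ^ 3 := by
  rw [erProb_eq]
  have hite0 : ∀ (v : Fin n × Fin n × Fin n) (s : Finset (Sym2 (Fin n))),
      0 ≤ (if tri v ⊆ s then w n p s else 0) := by
    intro v s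
    split_ifs
    · exact w_nonneg hp0 hp1 s
    · exact le_refl 0
  calc ∑ s ∈ (K n).powerset, (if ∃ v ∈ Dst n, tri v ⊆ s then w n p s else 0)
      ≤ ∑ s ∈ (K n).powerset, ∑ v ∈ Dst n, (if tri v ⊆ s then w n p s else 0) := by
        apply Finset.sum_le_sum
        intro s _
        by_cases h : ∃ v ∈ Dst n, tri v ⊆ s
        · rw [if_pos h]
          obtain ⟨v, hv, hsub⟩ := h
          calc w n p s = (if tri v ⊆ s then w n p s else 0) := (if_pos hsub).symm
            _ ≤ _ := Finset.single_le_sum (fun i _ => hite0 i s) hv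
        · rw [if_neg h]
          exact Finset.sum_nonneg fun v _ => hite0 v s
    _ = ∑ v ∈ Dst n, ∑ s ∈ (K n).powerset, (if tri v ⊆ s then w n p s else 0) :=
        Finset.sum_comm
    _ = ∑ v ∈ Dst n, p ^ 3 := by
        apply Finset.sum_congr rfl
        intro v hv
        have h := sum_powerset_weight_event (K n) (tri v) (tri_subset_K hv) p
        simp only [w]
        rw [h, card_tri hv]
    _ = ((Dst n).card : ℝ) * p ^ 3 := by rw [Finset.sum_const, nsmul_eq_mul]
    _ ≤ (n : ℝ) ^ 3 * p ^ 3 := by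
        apply mul_le_mul_of_nonneg_right _ (pow_nonneg hp0 3)
        exact_mod_cast card_Dst_le n


set_option maxHeartbeats 1600000 in
open Classical in
lemma erProbTri_ge (n : ℕ) (p : ℝ) (hn : 6 ≤ n) (hp0 : 0 < p) (hp1 : p ≤ 1) :
    1 - (108 / ((n : ℝ) * p) ^ 3 + 108 / ((n : ℝ) * p)) ≤
      erProb n p (fun G => ∃ a b c : Fin n, G.Adj a b ∧ G.Adj a c ∧ G.Adj b c) := by
  classical
  rw [erProb_eq]
  set D := Dst n with hD
  set X : Finset (Sym2 (Fin n)) → ℝ :=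
    fun s => ∑ v ∈ D, (if tri v ⊆ s then (1 : ℝ) else 0) with hX
  set Q := ∑ s ∈ (K n).powerset, (if ∃ v ∈ D, tri v ⊆ s then w n p s else 0) with hQ
  have hw0 : ∀ s, 0 ≤ w n p s := w_nonneg hp0.le hp1
  have hQ0 : 0 ≤ Q := by
    apply Finset.sum_nonneg
    intro s _
    split_ifs
    · exact hw0 s
    · exact le_refl 0
  have hQ1 : Q ≤ 1 := by
    calc Q ≤ ∑ s ∈ (K n).powerset, w n p s := by
          apply Finset.sum_le_sum
          intro s _
          split_ifs
          · exact le_refl _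
          · exact hw0 s
      _ = 1 := by simp only [w]; exact sum_powerset_weight (K n) p
  -- first moment
  have hE1 : ∑ s ∈ (K n).powerset, w n p s * X s = (D.card : ℝ) * p ^ 3 := by
    calc ∑ s ∈ (K n).powerset, w n p s * X s
        = ∑ s ∈ (K n).powerset, ∑ v ∈ D, (if tri v ⊆ s then w n p s else 0) := by
          apply Finset.sum_congr rfl
          intro s _
          rw [hX, Finset.mul_sum]
          apply Finset.sum_congr rfl
          intro v _
          rw [mul_ite, mul_one, mul_zero]
      _ = ∑ v ∈ D, ∑ s ∈ (K n).powerset, (if tri v ⊆ s then w n p s else 0) :=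
          Finset.sum_comm
      _ = ∑ v ∈ D, p ^ 3 := by
          apply Finset.sum_congr rfl
          intro v hv
          have h := sum_powerset_weight_event (K n) (tri v) (tri_subset_K hv) p
          simp only [w]
          rw [h, card_tri hv]
      _ = (D.card : ℝ) * p ^ 3 := by rw [Finset.sum_const, nsmul_eq_mul]
  -- second moment
  have hE2 : ∑ s ∈ (K n).powerset, w n p s * X s ^ 2
      = ∑ u ∈ D, ∑ v ∈ D, p ^ ((tri u ∪ tri v).card) := by
    have step : ∀ s ∈ (K n).powerset, w n p s * X s ^ 2
        = ∑ u ∈ D, ∑ v ∈ D, (if tri u ∪ tri v ⊆ s then w n p s else 0) := by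
      intro s _
      rw [hX, sq, Finset.sum_mul_sum, Finset.mul_sum]
      apply Finset.sum_congr rfl
      intro u _
      rw [Finset.mul_sum]
      apply Finset.sum_congr rfl
      intro v _
      by_cases h1 : tri u ⊆ s <;> by_cases h2 : tri v ⊆ s <;>
        simp [h1, h2, Finset.union_subset_iff]
    rw [Finset.sum_congr rfl step, Finset.sum_comm]
    apply Finset.sum_congr rfl
    intro u hu
    rw [Finset.sum_comm]
    apply Finset.sum_congr rfl
    intro v hv
    have hsub : tri u ∪ tri v ⊆ K n :=
      Finset.union_subset (tri_subset_K hu) (tri_subset_K hv)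
    have h := sum_powerset_weight_event (K n) (tri u ∪ tri v) hsub p
    simp only [w]
    rw [h]
  -- lower bound on E2 (pointwise p^6 ≤ p^c since c ≤ 6)
  have hcard_union_le : ∀ u ∈ D, ∀ v ∈ D, (tri u ∪ tri v).card ≤ 6 := by
    intro u hu v hv
    have := Finset.card_union_le (tri u) (tri v)
    rw [card_tri hu, card_tri hv] at this
    omega
  have hE2ge : ((D.card : ℝ) * p ^ 3) ^ 2
      ≤ ∑ u ∈ D, ∑ v ∈ D, p ^ ((tri u ∪ tri v).card) := by
    have heq : ((D.card : ℝ) * p ^ 3) ^ 2 = ∑ u ∈ D, ∑ v ∈ D, p ^ 6 := by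
      rw [Finset.sum_const, Finset.sum_const, nsmul_eq_mul, nsmul_eq_mul]
      ring
    rw [heq]
    apply Finset.sum_le_sum
    intro u hu
    apply Finset.sum_le_sum
    intro v hv
    exact pow_le_pow_of_le_one hp0.le hp1 (hcard_union_le u hu v hv)
  -- upper bound on E2
  have hptw : ∀ u ∈ D, ∀ v ∈ D, p ^ ((tri u ∪ tri v).card)
      ≤ p ^ 6 + ((if v ∈ Cset u then p ^ 3 else 0) + (if v ∈ Bset u then p ^ 5 else 0)) := by
    intro u hu v hv
    have hC0 : (0:ℝ) ≤ (if v ∈ Cset u then p ^ 3 else 0) := by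
      split_ifs
      · positivity
      · exact le_refl 0
    have hB0 : (0:ℝ) ≤ (if v ∈ Bset u then p ^ 5 else 0) := by
      split_ifs
      · positivity
      · exact le_refl 0
    have hp6 : (0:ℝ) ≤ p ^ 6 := by positivity
    by_cases heq : tri u = tri v
    · have hmem : v ∈ Cset u := mem_Cset (coords_of_tri_eq hu heq)
      rw [heq, Finset.union_self, card_tri hv, if_pos hmem]
      linarith
    · by_cases hsh : ∃ e, e ∈ tri u ∧ e ∈ tri v
      · obtain ⟨e, heu, hev⟩ := hsh
        have hmem : v ∈ Bset u := mem_Bset (coords_of_shared hu hv heu hev)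
        have hint1 : (tri u ∩ tri v).card ≤ 1 := by
          by_contra hgt
          push_neg at hgt
          obtain ⟨e1, he1, e2, he2, hne⟩ := Finset.one_lt_card.1 hgt
          rw [Finset.mem_inter] at he1 he2
          exact heq (tri_eq_of_two_shared hu hv he1.1 he1.2 he2.1 he2.2 hne)
        have hint2 : 1 ≤ (tri u ∩ tri v).card :=
          Finset.card_pos.2 ⟨e, Finset.mem_inter.2 ⟨heu, hev⟩⟩
        have hcu : (tri u ∪ tri v).card + (tri u ∩ tri v).card = 6 := by
          rw [Finset.card_union_add_card_inter, card_tri hu, card_tri hv]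
        have h5 : 5 ≤ (tri u ∪ tri v).card := by omega
        have : p ^ ((tri u ∪ tri v).card) ≤ p ^ 5 :=
          pow_le_pow_of_le_one hp0.le hp1 h5
        rw [if_pos hmem]
        linarith
      · have hdisj : Disjoint (tri u) (tri v) :=
          Finset.disjoint_left.2 fun e h1 h2 => hsh ⟨e, h1, h2⟩
        rw [Finset.card_union_of_disjoint hdisj, card_tri hu, card_tri hv]
        norm_num
        linarith
  have hE2le : ∑ u ∈ D, ∑ v ∈ D, p ^ ((tri u ∪ tri v).card)
      ≤ ((D.card : ℝ) * p ^ 3) ^ 2 + (27 * (n:ℝ) ^ 3 * p ^ 3 + 27 * (n:ℝ) ^ 4 * p ^ 5) := by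
    have step1 : ∑ u ∈ D, ∑ v ∈ D, p ^ ((tri u ∪ tri v).card)
        ≤ ∑ u ∈ D, ∑ v ∈ D,
          (p ^ 6 + ((if v ∈ Cset u then p ^ 3 else 0) + (if v ∈ Bset u then p ^ 5 else 0))) := by
      apply Finset.sum_le_sum
      intro u hu
      apply Finset.sum_le_sum
      intro v hv
      exact hptw u hu v hv
    have hCsum : ∀ u : Fin n × Fin n × Fin n,
        ∑ v ∈ D, (if v ∈ Cset u then p ^ 3 else 0) ≤ 27 * p ^ 3 := by
      intro u
      calc ∑ v ∈ D, (if v ∈ Cset u then p ^ 3 else 0)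
          ≤ ∑ v ∈ (univ : Finset (Fin n × Fin n × Fin n)), (if v ∈ Cset u then p ^ 3 else 0) := by
            apply Finset.sum_le_sum_of_subset_of_nonneg (Finset.subset_univ D)
            intro v _ _
            split_ifs
            · positivity
            · exact le_refl 0
        _ = ∑ v ∈ (univ : Finset (Fin n × Fin n × Fin n)) ∩ Cset u, p ^ 3 :=
            Finset.sum_ite_mem _ _ _
        _ = ((Cset u).card : ℝ) * p ^ 3 := by
            rw [Finset.univ_inter, Finset.sum_const, nsmul_eq_mul]
        _ ≤ 27 * p ^ 3 := by
            apply mul_le_mul_of_nonneg_right _ (by positivity)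
            exact_mod_cast card_Cset_le u
    have hBsum : ∀ u : Fin n × Fin n × Fin n,
        ∑ v ∈ D, (if v ∈ Bset u then p ^ 5 else 0) ≤ 27 * (n:ℝ) * p ^ 5 := by
      intro u
      calc ∑ v ∈ D, (if v ∈ Bset u then p ^ 5 else 0)
          ≤ ∑ v ∈ (univ : Finset (Fin n × Fin n × Fin n)), (if v ∈ Bset u then p ^ 5 else 0) := by
            apply Finset.sum_le_sum_of_subset_of_nonneg (Finset.subset_univ D)
            intro v _ _
            split_ifs
            · positivity
            · exact le_refl 0
        _ = ∑ v ∈ (univ : Finset (Fin n × Fin n × Fin n)) ∩ Bset u, p ^ 5 :=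
            Finset.sum_ite_mem _ _ _
        _ = ((Bset u).card : ℝ) * p ^ 5 := by
            rw [Finset.univ_inter, Finset.sum_const, nsmul_eq_mul]
        _ ≤ 27 * (n:ℝ) * p ^ 5 := by
            apply mul_le_mul_of_nonneg_right _ (by positivity)
            have := card_Bset_le u
            calc ((Bset u).card : ℝ) ≤ ((27 * n : ℕ) : ℝ) := by exact_mod_cast this
              _ = 27 * (n:ℝ) := by push_cast; ring
    have hDle : (D.card : ℝ) ≤ (n:ℝ) ^ 3 := by
      calc (D.card : ℝ) ≤ ((n ^ 3 : ℕ) : ℝ) := by exact_mod_cast card_Dst_le n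
        _ = (n:ℝ) ^ 3 := by push_cast; ring
    calc ∑ u ∈ D, ∑ v ∈ D, p ^ ((tri u ∪ tri v).card)
        ≤ ∑ u ∈ D, ∑ v ∈ D,
          (p ^ 6 + ((if v ∈ Cset u then p ^ 3 else 0) + (if v ∈ Bset u then p ^ 5 else 0))) :=
          step1
      _ = ∑ u ∈ D, ((∑ v ∈ D, p ^ 6)
            + (∑ v ∈ D, (if v ∈ Cset u then p ^ 3 else 0)
              + ∑ v ∈ D, (if v ∈ Bset u then p ^ 5 else 0))) := by
          apply Finset.sum_congr rfl
          intro u _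
          rw [Finset.sum_add_distrib, Finset.sum_add_distrib]
      _ ≤ ∑ u ∈ D, ((∑ v ∈ D, p ^ 6) + (27 * p ^ 3 + 27 * (n:ℝ) * p ^ 5)) := by
          apply Finset.sum_le_sum
          intro u _
          have := add_le_add (hCsum u) (hBsum u)
          linarith
      _ = (D.card : ℝ) ^ 2 * p ^ 6 + (D.card : ℝ) * (27 * p ^ 3 + 27 * (n:ℝ) * p ^ 5) := by
          simp only [Finset.sum_const, nsmul_eq_mul]
          push_cast
          ring
      _ ≤ ((D.card : ℝ) * p ^ 3) ^ 2 + (27 * (n:ℝ) ^ 3 * p ^ 3 + 27 * (n:ℝ) ^ 4 * p ^ 5) := by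
          have hD0 : (0:ℝ) ≤ (D.card : ℝ) := Nat.cast_nonneg _
          have h1 : (D.card : ℝ) * (27 * p ^ 3) ≤ (n:ℝ) ^ 3 * (27 * p ^ 3) := by
            apply mul_le_mul_of_nonneg_right hDle (by positivity)
          have h2 : (D.card : ℝ) * (27 * (n:ℝ) * p ^ 5) ≤ (n:ℝ) ^ 3 * (27 * (n:ℝ) * p ^ 5) := by
            apply mul_le_mul_of_nonneg_right hDle (by positivity)
          have : ((D.card : ℝ) * p ^ 3) ^ 2 = (D.card : ℝ) ^ 2 * p ^ 6 := by ring
          rw [this]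
          nlinarith [h1, h2]
  -- Cauchy–Schwarz
  have hCS : (∑ s ∈ (K n).powerset, w n p s * X s) ^ 2
      ≤ (∑ s ∈ (K n).powerset, w n p s * X s ^ 2) * Q := by
    have h := Finset.sum_mul_sq_le_sq_mul_sq (K n).powerset
      (fun s => Real.sqrt (w n p s) * X s)
      (fun s => Real.sqrt (w n p s) * (if ∃ v ∈ D, tri v ⊆ s then 1 else 0))
    have e1 : ∀ s ∈ (K n).powerset,
        (Real.sqrt (w n p s) * X s) *
          (Real.sqrt (w n p s) * (if ∃ v ∈ D, tri v ⊆ s then 1 else 0))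
        = w n p s * X s := by
      intro s _
      by_cases hev : ∃ v ∈ D, tri v ⊆ s
      · rw [if_pos hev, mul_one]
        calc (Real.sqrt (w n p s) * X s) * Real.sqrt (w n p s)
            = Real.sqrt (w n p s) * Real.sqrt (w n p s) * X s := by ring
          _ = w n p s * X s := by rw [Real.mul_self_sqrt (hw0 s)]
      · have hX0 : X s = 0 := by
          rw [hX]
          apply Finset.sum_eq_zero
          intro v hv
          exact if_neg fun hsub => hev ⟨v, hv, hsub⟩
        rw [if_neg hev, hX0]
        ring
    have e2 : ∀ s ∈ (K n).powerset,
        (Real.sqrt (w n p s) * X s) ^ 2 = w n p s * X s ^ 2 := by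
      intro s _
      rw [mul_pow, Real.sq_sqrt (hw0 s)]
    have e3 : ∀ s ∈ (K n).powerset,
        (Real.sqrt (w n p s) * (if ∃ v ∈ D, tri v ⊆ s then 1 else 0)) ^ 2
          = (if ∃ v ∈ D, tri v ⊆ s then w n p s else 0) := by
      intro s _
      rw [mul_pow, Real.sq_sqrt (hw0 s)]
      by_cases hev : ∃ v ∈ D, tri v ⊆ s
      · rw [if_pos hev, if_pos hev, one_pow, mul_one]
      · rw [if_neg hev, if_neg hev]
        norm_num
    rw [Finset.sum_congr rfl e1, Finset.sum_congr rfl e2, Finset.sum_congr rfl e3] at h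
    exact h
  -- numeric endgame
  set E1 : ℝ := (D.card : ℝ) * p ^ 3 with hE1def
  set δ : ℝ := 27 * (n:ℝ) ^ 3 * p ^ 3 + 27 * (n:ℝ) ^ 4 * p ^ 5 with hδ
  have hδ0 : 0 ≤ δ := by positivity
  have hn' : (6:ℝ) ≤ (n:ℝ) := by exact_mod_cast hn
  have hnpos : (0:ℝ) < (n:ℝ) := by linarith
  have hDge : (n:ℝ) ^ 3 / 2 ≤ (D.card : ℝ) := by
    have h := card_Dst_ge n
    have hcast : (n:ℝ) ^ 3 ≤ (D.card : ℝ) + 3 * (n:ℝ) ^ 2 := by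
      have : ((n ^ 3 : ℕ) : ℝ) ≤ (((Dst n).card + 3 * n ^ 2 : ℕ) : ℝ) := by exact_mod_cast h
      push_cast at this
      linarith
    nlinarith [sq_nonneg ((n:ℝ))]
  have hE1pos : 0 < E1 := by
    rw [hE1def]
    have : (0:ℝ) < (n:ℝ) ^ 3 / 2 := by positivity
    exact mul_pos (lt_of_lt_of_le this hDge) (by positivity)
  have hCS' : E1 ^ 2 ≤ (E1 ^ 2 + δ) * Q := by
    calc E1 ^ 2 ≤ (∑ s ∈ (K n).powerset, w n p s * X s ^ 2) * Q := by
          rw [← hE1]; exact hCS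
      _ ≤ (E1 ^ 2 + δ) * Q := by
          apply mul_le_mul_of_nonneg_right _ hQ0
          rw [hE2]
          exact hE2le
  have hQge : 1 - δ / E1 ^ 2 ≤ Q := by
    have hE1sq : 0 < E1 ^ 2 := pow_pos hE1pos 2
    have hden : 0 < E1 ^ 2 + δ := by linarith
    have hstep : E1 ^ 2 / (E1 ^ 2 + δ) ≤ Q := by
      rw [div_le_iff₀ hden]
      linarith [hCS']
    have hstep2 : 1 - δ / E1 ^ 2 ≤ E1 ^ 2 / (E1 ^ 2 + δ) := by
      have e : 1 - δ / E1 ^ 2 = (E1 ^ 2 - δ) / E1 ^ 2 := by field_simp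
      rw [e, div_le_div_iff₀ hE1sq hden]
      nlinarith [sq_nonneg δ]
    linarith
  set c : ℝ := (n : ℝ) * p with hc
  have hc0 : 0 < c := mul_pos hnpos hp0
  suffices hfin : δ / E1 ^ 2 ≤ 108 / c ^ 3 + 108 / c by linarith
  have hE1ge : c ^ 3 / 2 ≤ E1 := by
    have h' : (n:ℝ) ^ 3 / 2 * p ^ 3 ≤ (D.card : ℝ) * p ^ 3 :=
      mul_le_mul_of_nonneg_right hDge (by positivity)
    have e : (n:ℝ) ^ 3 / 2 * p ^ 3 = c ^ 3 / 2 := by rw [hc, mul_pow]; ring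
    rw [hE1def]
    linarith
  have hcc : (0:ℝ) < c ^ 3 / 2 := by positivity
  have hE1sq_ge : (c ^ 3 / 2) ^ 2 ≤ E1 ^ 2 := by
    apply pow_le_pow_left₀ hcc.le hE1ge
  have h1 : δ / E1 ^ 2 ≤ δ / ((c ^ 3 / 2) ^ 2) :=
    div_le_div_of_nonneg_left hδ0 (by positivity) hE1sq_ge
  have hn0 : (n:ℝ) ≠ 0 := ne_of_gt hnpos
  have hp0' : p ≠ 0 := ne_of_gt hp0
  have key : δ / ((c ^ 3 / 2) ^ 2) = 108 / c ^ 3 + 108 / ((n:ℝ) ^ 2 * p) := by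
    rw [hδ, hc]
    field_simp
    ring
  have last : 108 / ((n:ℝ) ^ 2 * p) ≤ 108 / c := by
    apply div_le_div_of_nonneg_left (by norm_num) hc0
    rw [hc]
    nlinarith [hp0.le, hn']
  linarith

end TriThresh

/-- `p₀(n) = 1/n` is a threshold function for `G_{n,p}` to contain a triangle: if
`p ≪ 1/n` then `P(G_{n,p} ⊇ K₃) → 0`, and if `p ≫ 1/n` then `P(G_{n,p} ⊇ K₃) → 1`. -/
theorem triangle_threshold (p : ℕ → ℝ) (hp : ∀ n, 0 ≤ p n ∧ p n ≤ 1) :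
    (Filter.Tendsto (fun n => p n / (1 / (n : ℝ))) Filter.atTop (nhds 0) →
      Filter.Tendsto
        (fun n => erProb n (p n) (fun G =>
          ∃ a b c : Fin n, G.Adj a b ∧ G.Adj a c ∧ G.Adj b c))
        Filter.atTop (nhds 0)) ∧
    (Filter.Tendsto (fun n => p n / (1 / (n : ℝ))) Filter.atTop Filter.atTop →
      Filter.Tendsto
        (fun n => erProb n (p n) (fun G =>
          ∃ a b c : Fin n, G.Adj a b ∧ G.Adj a c ∧ G.Adj b c))
        Filter.atTop (nhds 1)) := by
  have hrw : (fun n => p n / (1 / (n : ℝ))) = fun n : ℕ => (n : ℝ) * p n := by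
    funext n
    rw [div_div_eq_mul_div, div_one, mul_comm]
  constructor
  · intro h
    rw [hrw] at h
    have hcube : Filter.Tendsto (fun n : ℕ => ((n : ℝ) * p n) ^ 3) Filter.atTop (nhds 0) := by
      have := h.pow 3
      simpa using this
    apply tendsto_of_tendsto_of_tendsto_of_le_of_le (g := fun _ => (0 : ℝ))
      tendsto_const_nhds hcube
    · intro n
      exact TriThresh.erProbTri_nonneg n (p n) (hp n).1 (hp n).2
    · intro n
      calc erProb n (p n) (fun G => ∃ a b c : Fin n, G.Adj a b ∧ G.Adj a c ∧ G.Adj b c)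
          ≤ (n : ℝ) ^ 3 * (p n) ^ 3 := TriThresh.erProbTri_le_cube n (p n) (hp n).1 (hp n).2
        _ = ((n : ℝ) * p n) ^ 3 := by ring
  · intro h
    rw [hrw] at h
    have h3 : Filter.Tendsto (fun n : ℕ => ((n : ℝ) * p n) ^ 3) Filter.atTop Filter.atTop :=
      (Filter.tendsto_pow_atTop (by norm_num)).comp h
    have hinv1 : Filter.Tendsto (fun n : ℕ => 108 / ((n : ℝ) * p n)) Filter.atTop (nhds 0) :=
      Filter.Tendsto.div_atTop tendsto_const_nhds h
    have hinv3 : Filter.Tendsto (fun n : ℕ => 108 / ((n : ℝ) * p n) ^ 3) Filter.atTop (nhds 0) :=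
      Filter.Tendsto.div_atTop tendsto_const_nhds h3
    have hlow : Filter.Tendsto
        (fun n : ℕ => 1 - (108 / ((n : ℝ) * p n) ^ 3 + 108 / ((n : ℝ) * p n)))
        Filter.atTop (nhds 1) := by
      have := (tendsto_const_nhds (x := (1:ℝ)) (f := Filter.atTop (α := ℕ))).sub
        (hinv3.add hinv1)
      simpa using this
    apply tendsto_of_tendsto_of_tendsto_of_le_of_le' hlow tendsto_const_nhds
    · have hev1 : ∀ᶠ n in Filter.atTop, 6 ≤ n := Filter.eventually_ge_atTop 6
      have hev2 : ∀ᶠ n : ℕ in Filter.atTop, (1:ℝ) ≤ (n : ℝ) * p n := h.eventually_ge_atTop 1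
      filter_upwards [hev1, hev2] with n h6 h1c
      have hppos : 0 < p n := by
        rcases lt_or_ge 0 (p n) with h' | h'
        · exact h'
        · exfalso
          have : (n : ℝ) * p n ≤ 0 := mul_nonpos_of_nonneg_of_nonpos (Nat.cast_nonneg n) h'
          linarith
      exact TriThresh.erProbTri_ge n (p n) h6 hppos (hp n).2
    · filter_upwards with n
      exact TriThresh.erProbTri_le_one n (p n) (hp n).1 (hp n).2
end
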